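/- arXiv:2208.03539 — 7 statements merged into one kernel-verified Lean document; each statement's English description precedes it below -/
import Mathlib

section
/- Fix a positive integer m, a commutative ring R, and a sequence α = (α_i)_{i≥m} in R. Define λ_{0,j} = 1 for all j ∈ ℕ, λ_{i,j} = Σ_{j ≥ ℓ_1 ≥ ℓ_2 ≥ ⋯ ≥ ℓ_i ≥ i} ∏_{k=1}^{i} α_{k·m+ℓ_k} for 1 ≤ i ≤ j, and λ_{i,j} = 0 for i > j. Then for all n, j ∈ ℕ the modified m-Stieltjes–Rogers polynomial equals the finite sum Ŝ^{(m)}_{n,j}(α) = Σ_{i=0}^{j} S^{(m)}_{n,i}(α) · λ_{i,j}, i.e. the matrix of modified m-Stieltjes–Rogers polynomials factors as Ŝ^{(m)} = S^{(m)} · Λ^{(m)} with Λ^{(m)} = (λ_{i,j}) upper triangular. -/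
open Finset

/-- `dyckD m α x y` is the generating polynomial of partial `m`-Dyck paths from `(0,0)` to
`(x,y)`: paths using steps `(1,1)` of weight `1` and `(1,-m)` of weight `α i` when the fall
starts at height `i`. -/
def dyckD {R : Type*} [CommRing R] (m : ℕ) (α : ℕ → R) : ℕ → ℕ → R
  | 0, 0 => 1
  | 0, _ + 1 => 0
  | x + 1, 0 => α m * dyckD m α x m
  | x + 1, y + 1 => dyckD m α x y + α (y + 1 + m) * dyckD m α x (y + 1 + m)

/-- The entries `λ_{i,j}` of the upper-triangular matrix `Λ^{(m)}`:
`λ_{0,j} = 1` and, for `i ≥ 1`,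
`λ_{i,j} = Σ_{j ≥ ℓ_1 ≥ ⋯ ≥ ℓ_i ≥ i} ∏_{k=1}^{i} α_{k·m+ℓ_k}` (an empty sum, hence `0`,
when `i > j`). -/
def lamEntry {R : Type*} [CommRing R] (m : ℕ) (α : ℕ → R) (i j : ℕ) : R :=
  if i = 0 then 1
  else
    ∑ ℓ ∈ Finset.univ.filter
        (fun ℓ : Fin i → Fin (j + 1) =>
          (∀ k l : Fin i, k ≤ l → (ℓ l : ℕ) ≤ (ℓ k : ℕ)) ∧ ∀ k : Fin i, i ≤ (ℓ k : ℕ)),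
      ∏ k : Fin i, α (((k : ℕ) + 1) * m + (ℓ k : ℕ))

section Aux

variable {R : Type*} [CommRing R]

/-- Auxiliary: sums over weakly decreasing tuples `c ≥ ℓ_1 ≥ ⋯ ≥ ℓ_f ≥ b` of
`∏_{k=1}^{f} α_{k·m+ℓ_k}`. -/
def phi (m : ℕ) (α : ℕ → R) (f b c : ℕ) : R :=
  ∑ ℓ ∈ Finset.univ.filter
      (fun ℓ : Fin f → Fin (c + 1) =>
        (∀ k l : Fin f, k ≤ l → (ℓ l : ℕ) ≤ (ℓ k : ℕ)) ∧ ∀ k : Fin f, b ≤ (ℓ k : ℕ)),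
    ∏ k : Fin f, α (((k : ℕ) + 1) * m + (ℓ k : ℕ))

lemma phi_zero (m : ℕ) (α : ℕ → R) (b c : ℕ) : phi m α 0 b c = 1 := by
  simp [phi]

lemma lam_eq_phi (m : ℕ) (α : ℕ → R) (i j : ℕ) : lamEntry m α i j = phi m α i i j := by
  cases i with
  | zero => simp [lamEntry, phi_zero]
  | succ i => simp [lamEntry, phi]

lemma phi_empty (m : ℕ) (α : ℕ → R) (f b c : ℕ) (h : c < b) : phi m α (f + 1) b c = 0 := by
  unfold phi
  rw [Finset.filter_false_of_mem, Finset.sum_empty]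
  rintro ℓ - ⟨-, h2⟩
  have := h2 0
  have := (ℓ 0).isLt
  omega

lemma lam_vanish (m : ℕ) (α : ℕ → R) (i j : ℕ) (h : j < i) : lamEntry m α i j = 0 := by
  obtain ⟨d, rfl⟩ : ∃ d, i = d + 1 := ⟨i - 1, by omega⟩
  rw [lam_eq_phi, phi_empty m α d (d + 1) j (by omega)]

lemma phi_succ (m : ℕ) (α : ℕ → R) (f b c : ℕ) (hb : b ≤ c + 1) :
    phi m α (f + 1) b (c + 1)
      = phi m α (f + 1) b c + α (m + (c + 1)) * phi m α f (b + m) (c + 1 + m) := by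
  unfold phi
  rw [← Finset.sum_filter_add_sum_filter_not
    (Finset.univ.filter (fun ℓ : Fin (f + 1) → Fin (c + 2) =>
        (∀ k l : Fin (f + 1), k ≤ l → (ℓ l : ℕ) ≤ (ℓ k : ℕ)) ∧
          ∀ k : Fin (f + 1), b ≤ (ℓ k : ℕ)))
    (fun ℓ => (ℓ 0 : ℕ) ≤ c)]
  congr 1
  · -- part 1 : ℓ 0 ≤ c
    rw [Finset.filter_filter]
    refine Finset.sum_bij'
      (i := fun ℓ hℓ => fun k => (⟨(ℓ k : ℕ), ?_⟩ : Fin (c + 1)))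
      (j := fun ℓ _ => fun k => Fin.castSucc (ℓ k)) ?_ ?_ ?_ ?_ ?_
    · simp only [Finset.mem_filter, Finset.mem_univ, true_and] at hℓ
      have h1 := hℓ.1.1 0 k (Fin.zero_le k)
      have h2 := hℓ.2
      omega
    · intro ℓ hℓ
      simp only [Finset.mem_filter, Finset.mem_univ, true_and] at hℓ ⊢
      exact ⟨fun k l hkl => hℓ.1.1 k l hkl, fun k => hℓ.1.2 k⟩
    · intro ℓ hℓ
      simp only [Finset.mem_filter, Finset.mem_univ, true_and] at hℓ ⊢
      refine ⟨⟨fun k l hkl => ?_, fun k => ?_⟩, ?_⟩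
      · simpa using hℓ.1 k l hkl
      · simpa using hℓ.2 k
      · simpa using Nat.lt_succ_iff.mp (ℓ 0).isLt
    · intro ℓ hℓ
      funext k
      apply Fin.ext
      simp
    · intro ℓ hℓ
      funext k
      apply Fin.ext
      simp
    · intro ℓ hℓ
      rfl
  · -- part 2 : ℓ 0 = c + 1
    rw [Finset.filter_filter, Finset.mul_sum]
    refine Finset.sum_bij'
      (i := fun ℓ _ => fun k : Fin f => (⟨(ℓ k.succ : ℕ) + m, by have := (ℓ k.succ).isLt; omega⟩ :
        Fin (c + 1 + m + 1)))
      (j := fun ℓ _ => Fin.cons ⟨c + 1, by omega⟩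
        (fun k : Fin f => (⟨(ℓ k : ℕ) - m, by have := (ℓ k).isLt; omega⟩ : Fin (c + 2))))
      ?_ ?_ ?_ ?_ ?_
    · intro ℓ hℓ
      simp only [Finset.mem_filter, Finset.mem_univ, true_and] at hℓ ⊢
      refine ⟨fun k l hkl => ?_, fun k => ?_⟩
      · have := hℓ.1.1 k.succ l.succ (Fin.succ_le_succ_iff.mpr hkl)
        omega
      · have := hℓ.1.2 k.succ
        omega
    · intro ℓ hℓ
      simp only [Finset.mem_filter, Finset.mem_univ, true_and] at hℓ ⊢
      refine ⟨⟨fun k l hkl => ?_, fun k => ?_⟩, ?_⟩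
      · induction k using Fin.cases with
        | zero =>
          induction l using Fin.cases with
          | zero => exact le_rfl
          | succ l =>
            simp only [Fin.cons_zero, Fin.cons_succ]
            have := (ℓ l).isLt
            omega
        | succ k =>
          induction l using Fin.cases with
          | zero =>
            exact absurd (Fin.le_zero_iff.mp hkl) (Fin.succ_ne_zero k)
          | succ l =>
            have hkl' : k ≤ l := Fin.succ_le_succ_iff.mp hkl
            have := hℓ.1 k l hkl'
            simp only [Fin.cons_succ]
            omega
      · induction k using Fin.cases with
        | zero => simpa using hb
        | succ k =>
          have := hℓ.2 k
          simp only [Fin.cons_succ]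
          omega
      · simp
    · intro ℓ hℓ
      simp only [Finset.mem_filter, Finset.mem_univ, true_and] at hℓ
      have h0 : (ℓ 0 : ℕ) = c + 1 := by have := (ℓ 0).isLt; omega
      funext k
      induction k using Fin.cases with
      | zero => simp [Fin.ext_iff, h0]
      | succ k =>
        have hk := hℓ.1.2 k.succ
        simp only [Fin.cons_succ, Fin.ext_iff]
        omega
    · intro ℓ hℓ
      simp only [Finset.mem_filter, Finset.mem_univ, true_and] at hℓ
      funext k
      have hk := hℓ.2 k
      simp only [Fin.cons_succ, Fin.ext_iff]
      omega
    · intro ℓ hℓ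
      simp only [Finset.mem_filter, Finset.mem_univ, true_and] at hℓ
      have h0 : (ℓ 0 : ℕ) = c + 1 := by have := (ℓ 0).isLt; omega
      rw [Fin.prod_univ_succ]
      congr 1
      · congr 1
        simp only [Fin.val_zero, h0]
        ring
      · refine Finset.prod_congr rfl fun k _ => ?_
        congr 1
        simp only [Fin.val_succ]
        ring

/-- The transfer polynomial: paths of length `x` from height `y` to height `h`. -/
def eD (m : ℕ) (α : ℕ → R) (y : ℕ) : ℕ → ℕ → R
  | 0, h => if y = h then 1 else 0
  | x + 1, 0 => α m * eD m α y x m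
  | x + 1, h + 1 => eD m α y x h + α (h + 1 + m) * eD m α y x (h + 1 + m)

lemma dyck_vanish (m : ℕ) (α : ℕ → R) : ∀ x y, x < y → dyckD m α x y = 0 := by
  intro x
  induction x with
  | zero => intro y hy; match y, hy with | y + 1, _ => rfl
  | succ x ih =>
    intro y hy
    match y, hy with
    | y + 1, hy =>
      rw [dyckD, ih y (by omega), ih (y + 1 + m) (by omega)]
      ring

lemma dyck_split (m : ℕ) (α : ℕ → R) (a : ℕ) :
    ∀ b h, dyckD m α (a + b) h = ∑ y ∈ range (a + 1), dyckD m α a y * eD m α y b h := by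
  intro b
  induction b with
  | zero =>
    intro h
    simp only [Nat.add_zero, eD, mul_ite, mul_one, mul_zero]
    rw [Finset.sum_ite_eq' (range (a + 1)) h (fun y => dyckD m α a y)]
    by_cases hh : h ∈ range (a + 1)
    · simp [hh]
    · simp only [hh, if_false]
      exact (dyck_vanish m α a h (by simpa using hh))
  | succ b ih =>
    intro h
    have : a + (b + 1) = (a + b) + 1 := by omega
    rw [this]
    cases h with
    | zero =>
      rw [dyckD, ih m, Finset.mul_sum]
      refine Finset.sum_congr rfl fun y _ => ?_
      rw [eD]; ring
    | succ h =>
      rw [dyckD, ih h, ih (h + 1 + m), Finset.mul_sum, ← Finset.sum_add_distrib]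
      refine Finset.sum_congr rfl fun y _ => ?_
      rw [eD]; ring

lemma dyck_mod (m : ℕ) (α : ℕ → R) :
    ∀ x y, ¬ (x % (m + 1) = y % (m + 1)) → dyckD m α x y = 0 := by
  intro x
  induction x with
  | zero =>
    intro y hy
    match y with
    | 0 => exact absurd rfl hy
    | y + 1 => rfl
  | succ x ih =>
    intro y hy
    match y with
    | 0 =>
      rw [dyckD, ih m ?_, mul_zero]
      intro h
      exact hy (by rw [Nat.add_mod, h, ← Nat.add_mod, Nat.mod_self, Nat.zero_mod])
    | y + 1 =>
      rw [dyckD, ih y ?_, ih (y + 1 + m) ?_, mul_zero, add_zero]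
      all_goals intro h
      all_goals apply hy
      all_goals rw [Nat.add_mod, h, ← Nat.add_mod]
      have e : y + 1 + m + 1 = (y + 1) + (m + 1) := by omega
      rw [e, Nat.add_mod_right]

lemma eD_diag (m : ℕ) (α : ℕ → R) :
    ∀ s i t, eD m α ((m + 1) * i) s (s + (m + 1) * t)
      = if t ≤ i then phi m α (i - t) (i + t * m) (s + (m + 1) * t) else 0 := by
  intro s
  induction s with
  | zero =>
    intro i t
    simp only [Nat.zero_add]
    rcases Nat.lt_trichotomy t i with h | h | h
    · rw [if_pos h.le, eD, if_neg (fun he =>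
        absurd (Nat.eq_of_mul_eq_mul_left (Nat.succ_pos m) he) (by omega))]
      obtain ⟨d, hd⟩ : ∃ d, i - t = d + 1 := ⟨i - t - 1, by omega⟩
      rw [hd, phi_empty m α d (i + t * m) ((m + 1) * t) (by nlinarith)]
    · subst h
      rw [if_pos le_rfl, Nat.sub_self, phi_zero, eD, if_pos rfl]
    · rw [if_neg (by omega), eD, if_neg (fun he =>
        absurd (Nat.eq_of_mul_eq_mul_left (Nat.succ_pos m) he) (by omega))]
  | succ s ih =>
    intro i t
    have e1 : s + 1 + (m + 1) * t = (s + (m + 1) * t) + 1 := by omega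
    rw [e1, eD]
    have e2 : s + (m + 1) * t + 1 + m = s + (m + 1) * (t + 1) := by ring
    rw [e2, ih i t, ih i (t + 1)]
    rcases Nat.lt_trichotomy t i with h | h | h
    · rw [if_pos h.le, if_pos h.le]
      by_cases h2 : t + 1 ≤ i
      · rw [if_pos h2]
        by_cases h3 : i + t * m ≤ (s + (m + 1) * t) + 1
        · obtain ⟨d, hd⟩ : ∃ d, i - t = d + 1 := ⟨i - t - 1, by omega⟩
          have hd2 : i - (t + 1) = d := by omega
          rw [hd, hd2]
          have := phi_succ m α d (i + t * m) (s + (m + 1) * t) (by omega)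
          have e3 : m + (s + (m + 1) * t + 1) = s + (m + 1) * t + 1 + m := by ring
          have e4 : i + t * m + m = i + (t + 1) * m := by ring
          have e5 : s + (m + 1) * t + 1 + m = s + (m + 1) * (t + 1) := by ring
          rw [e3, e4, e5] at this
          rw [this]
        · -- all three phi vanish
          have e6 : (m + 1) * t = t * m + t := by ring
          have e7 : (m + 1) * (t + 1) = t * m + t + m + 1 := by ring
          have e8 : (t + 1) * m = t * m + m := by ring
          obtain ⟨d, hd⟩ : ∃ d, i - t = d + 1 := ⟨i - t - 1, by omega⟩
          obtain ⟨d', hd'⟩ : ∃ d', i - (t + 1) = d' + 1 := ⟨i - t - 2, by omega⟩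
          rw [hd, hd', phi_empty m α d _ _ (by omega), phi_empty m α d _ _ (by omega),
            phi_empty m α d' _ _ (by omega)]
          ring
      · omega
    · subst h
      rw [if_pos le_rfl, if_pos le_rfl, if_neg (by omega), Nat.sub_self, phi_zero, phi_zero]
      ring
    · rw [if_neg (by omega), if_neg (by omega), if_neg (by omega)]
      ring

lemma eD_lam (m : ℕ) (α : ℕ → R) (i j : ℕ) :
    eD m α ((m + 1) * i) j j = lamEntry m α i j := by
  have h := eD_diag m α j i 0
  rw [lam_eq_phi]
  simpa using h

end Aux

/-- The matrix of modified `m`-Stieltjes–Rogers polynomials factors as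
`Ŝ^{(m)} = S^{(m)} · Λ^{(m)}`:
`Ŝ^{(m)}_{n,j}(α) = Σ_{i=0}^{j} S^{(m)}_{n,i}(α) · λ_{i,j}`. -/
theorem stmt0 {R : Type*} [CommRing R] (m : ℕ) (hm : 0 < m) (α : ℕ → R) (n j : ℕ) :
    dyckD m α ((m + 1) * n + j) j
      = ∑ i ∈ Finset.range (j + 1),
          dyckD m α ((m + 1) * n) ((m + 1) * i) * lamEntry m α i j := by
  rw [dyck_split m α ((m + 1) * n) j j]
  have h1 : ∑ y ∈ range ((m + 1) * n + 1), dyckD m α ((m + 1) * n) y * eD m α y j j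
      = ∑ i ∈ range (n + 1), dyckD m α ((m + 1) * n) ((m + 1) * i) * eD m α ((m + 1) * i) j j := by
    rw [← Finset.sum_image (s := range (n + 1)) (g := fun i => (m + 1) * i)
      (f := fun y => dyckD m α ((m + 1) * n) y * eD m α y j j)
      (fun x _ y _ h => Nat.eq_of_mul_eq_mul_left (Nat.succ_pos m) h)]
    refine (Finset.sum_subset ?_ ?_).symm
    · intro y hy
      simp only [Finset.mem_image, Finset.mem_range] at hy ⊢
      obtain ⟨i, hi, rfl⟩ := hy
      have : (m + 1) * i ≤ (m + 1) * n := Nat.mul_le_mul_left _ (by omega)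
      omega
    · intro y hy hni
      by_cases hd : (m + 1) ∣ y
      · obtain ⟨q, rfl⟩ := hd
        exfalso
        apply hni
        simp only [Finset.mem_image, Finset.mem_range]
        refine ⟨q, ?_, rfl⟩
        simp only [Finset.mem_range] at hy
        have : (m + 1) * q ≤ (m + 1) * n := by omega
        have := Nat.le_of_mul_le_mul_left this (Nat.succ_pos m)
        omega
      · rw [dyck_mod m α _ _ ?_, zero_mul]
        rw [Nat.mul_mod_right]
        intro h
        exact hd (Nat.dvd_of_mod_eq_zero h.symm)
  rw [h1]
  have h2 : ∀ i, dyckD m α ((m + 1) * n) ((m + 1) * i) * eD m α ((m + 1) * i) j j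
      = dyckD m α ((m + 1) * n) ((m + 1) * i) * lamEntry m α i j := by
    intro i; rw [eD_lam]
  simp_rw [h2]
  set f : ℕ → R := fun i => dyckD m α ((m + 1) * n) ((m + 1) * i) * lamEntry m α i j with hf
  have hbig : ∀ s : ℕ, n ≤ s → j ≤ s →
      (∑ i ∈ range (n + 1), f i = ∑ i ∈ range (s + 1), f i
        ∧ ∑ i ∈ range (j + 1), f i = ∑ i ∈ range (s + 1), f i) := by
    intro s hn hj
    constructor
    · refine Finset.sum_subset (by intro x hx; simp at hx ⊢; omega) ?_
      intro i hi hni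
      simp only [Finset.mem_range] at hi hni
      have hlt : (m + 1) * n < (m + 1) * i := by
        have hle : (m + 1) * (n + 1) ≤ (m + 1) * i := Nat.mul_le_mul_left _ (by omega)
        have he : (m + 1) * (n + 1) = (m + 1) * n + (m + 1) := by ring
        omega
      rw [hf]
      simp only
      rw [dyck_vanish m α _ _ hlt, zero_mul]
    · refine Finset.sum_subset (by intro x hx; simp at hx ⊢; omega) ?_
      intro i hi hni
      simp only [Finset.mem_range] at hi hni
      rw [hf]
      simp only
      rw [lam_vanish m α i j (by omega), mul_zero]
  obtain ⟨ha, hb⟩ := hbig (max n j) (le_max_left _ _) (le_max_right _ _)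
  rw [ha, hb]
end

section
/- Let m ≥ 1, let R be a commutative ring, and let α_m, α_{m+1}, … ∈ R with the convention α_i := 0 for 0 ≤ i ≤ m−1. Fix N ∈ ℕ and define N×N matrices over R indexed by 0,…,N−1: for each 0 ≤ i ≤ m−1, L_i has (L_i)_{k,k} = 1 for all k, (L_i)_{k,k−1} = α_{k(m+1)+i} for 1 ≤ k ≤ N−1, and all other entries 0; and U has U_{k,k} = α_{k(m+1)+m} for all k, U_{k,k+1} = 1 for 0 ≤ k ≤ N−2, and all other entries 0. Set H = L_0 · L_1 · ⋯ · L_{m−1} · U. Then: H_{n−1,n} = 1 for 1 ≤ n ≤ N−1; H_{i,n} = 0 whenever i ≤ n−2 or i ≥ n+m+1; and for all n ∈ ℕ and 0 ≤ k ≤ m with n+k ≤ N−1, H_{n+k,n} = Σ_{m ≥ ℓ_0 > ℓ_1 > ⋯ > ℓ_k ≥ 0} ∏_{j=0}^{k} α_{(m+1)(n+j)+ℓ_j}. -/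
open Finset

/-- The lower-bidiagonal factor `L_i`: ones on the diagonal and
`(L_i)_{k,k-1} = α_{k(m+1)+i}` on the subdiagonal. -/
def Lmat (R : Type*) [CommRing R] (N m : ℕ) (α : ℕ → R) (i : ℕ) :
    Matrix (Fin N) (Fin N) R :=
  Matrix.of fun k l =>
    if (k : ℕ) = (l : ℕ) then 1
    else if (k : ℕ) = (l : ℕ) + 1 then α ((k : ℕ) * (m + 1) + i) else 0

/-- The upper-bidiagonal factor `U`: `U_{k,k} = α_{k(m+1)+m}` on the diagonal and
ones on the superdiagonal. -/
def Umat (R : Type*) [CommRing R] (N m : ℕ) (α : ℕ → R) :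
    Matrix (Fin N) (Fin N) R :=
  Matrix.of fun k l =>
    if (l : ℕ) = (k : ℕ) + 1 then 1
    else if (k : ℕ) = (l : ℕ) then α ((k : ℕ) * (m + 1) + m) else 0


def DecrSet (d s : ℕ) : Finset (Fin d → Fin s) :=
  Finset.univ.filter (fun ℓ => ∀ x y : Fin d, x < y → ℓ y < ℓ x)

lemma mem_decr {d s : ℕ} {ℓ : Fin d → Fin s} :
    ℓ ∈ DecrSet d s ↔ ∀ x y : Fin d, x < y → ℓ y < ℓ x := by
  simp [DecrSet]

lemma decr_empty {d s : ℕ} (h : s < d) : DecrSet d s = ∅ := by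
  ext ℓ
  simp only [mem_decr, Finset.notMem_empty, iff_false]
  intro hℓ
  have hinj : Function.Injective ℓ := by
    intro x y hxy
    by_contra hne
    rcases lt_or_gt_of_ne hne with h1 | h1
    · exact absurd hxy (ne_of_gt (hℓ x y h1))
    · exact absurd hxy (ne_of_lt (hℓ y x h1))
  have := Fintype.card_le_of_injective ℓ hinj
  simp at this; omega

lemma decr_zero_sum {R : Type*} [CommRing R] (s : ℕ) (f : ℕ → ℕ → R) :
    ∑ ℓ ∈ DecrSet 0 s, ∏ j : Fin 0, f (j : ℕ) ((ℓ j : ℕ)) = 1 := by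
  have h : DecrSet 0 s = Finset.univ := by
    ext ℓ; simp only [mem_decr, Finset.mem_univ, iff_true]; intro x; exact x.elim0
  rw [h, Finset.univ_unique, Finset.sum_singleton]
  simp

lemma cons_decr {d s : ℕ} (a : Fin (s+1)) (g : Fin d → Fin s)
    (hg : ∀ x y, x < y → g y < g x) (ha : ∀ j, ((g j : ℕ)) < (a : ℕ)) :
    ∀ x y : Fin (d+1), x < y →
      (Fin.cons a (fun j => (g j).castSucc) : Fin (d+1) → Fin (s+1)) y
        < (Fin.cons a (fun j => (g j).castSucc) : Fin (d+1) → Fin (s+1)) x := by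
  intro x y hxy
  rcases Fin.eq_zero_or_eq_succ x with rfl | ⟨x', rfl⟩ <;>
    rcases Fin.eq_zero_or_eq_succ y with rfl | ⟨y', rfl⟩
  · exact absurd hxy (lt_irrefl _)
  · simp only [Fin.cons_zero, Fin.cons_succ]
    exact Fin.lt_def.mpr (by simpa using ha y')
  · exact absurd hxy (Fin.not_lt_zero _)
  · simp only [Fin.cons_succ]
    exact Fin.castSucc_lt_castSucc_iff.mpr (hg x' y' (Fin.succ_lt_succ_iff.mp hxy))

lemma split_sum {R : Type*} [CommRing R] (d s : ℕ) (f : ℕ → ℕ → R) :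
    ∑ ℓ ∈ DecrSet (d+1) (s+1), ∏ j : Fin (d+1), f (j : ℕ) ((ℓ j : ℕ))
      = f 0 s * (∑ ℓ ∈ DecrSet d s, ∏ j : Fin d, f ((j : ℕ)+1) ((ℓ j : ℕ)))
        + ∑ ℓ ∈ DecrSet (d+1) s, ∏ j : Fin (d+1), f (j : ℕ) ((ℓ j : ℕ)) := by
  classical
  rw [← Finset.sum_filter_add_sum_filter_not (DecrSet (d+1) (s+1))
      (fun ℓ => (ℓ 0 : ℕ) = s)]
  congr 1
  · -- ℓ 0 = s part
    rw [Finset.mul_sum]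
    refine Finset.sum_bij' (i := fun ℓ hℓ => fun j : Fin d =>
        (⟨(ℓ j.succ : ℕ), by
          have hm := mem_decr.mp (Finset.mem_filter.mp hℓ).1
          have h0 : ((ℓ 0 : ℕ)) = s := (Finset.mem_filter.mp hℓ).2
          have := hm 0 j.succ (Fin.succ_pos j)
          have := Fin.lt_def.mp this
          omega⟩ : Fin s))
      (j := fun ℓ' _ => Fin.cons ⟨s, Nat.lt_succ_self s⟩ (fun j => (ℓ' j).castSucc))
      ?_ ?_ ?_ ?_ ?_
    · intro ℓ hℓ
      have hm := mem_decr.mp (Finset.mem_filter.mp hℓ).1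
      refine mem_decr.mpr fun x y hxy => ?_
      exact Fin.lt_def.mpr (Fin.lt_def.mp (hm x.succ y.succ (Fin.succ_lt_succ_iff.mpr hxy)))
    · intro ℓ' hℓ'
      have hm := mem_decr.mp hℓ'
      refine Finset.mem_filter.mpr ⟨mem_decr.mpr (cons_decr _ _ hm fun j => (ℓ' j).isLt), ?_⟩
      simp
    · intro ℓ hℓ
      have h0 : ((ℓ 0 : ℕ)) = s := (Finset.mem_filter.mp hℓ).2
      funext k
      rcases Fin.eq_zero_or_eq_succ k with rfl | ⟨k', rfl⟩
      · simp only [Fin.cons_zero]; exact Fin.ext (by simp [h0])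
      · simp only [Fin.cons_succ]; exact Fin.ext (by simp)
    · intro ℓ' hℓ'
      funext k
      exact Fin.ext (by simp)
    · intro ℓ hℓ
      have h0 : ((ℓ 0 : ℕ)) = s := (Finset.mem_filter.mp hℓ).2
      rw [Fin.prod_univ_succ]
      refine congrArg₂ (· * ·) (by simp [h0]) ?_
      exact Finset.prod_congr rfl fun j _ => by simp
  · -- ℓ 0 < s part
    refine Finset.sum_bij' (i := fun ℓ hℓ => fun j : Fin (d+1) =>
        (⟨(ℓ j : ℕ), by
          have hm := mem_decr.mp (Finset.mem_filter.mp hℓ).1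
          have h0 : ¬ ((ℓ 0 : ℕ)) = s := (Finset.mem_filter.mp hℓ).2
          have h1 : ((ℓ 0 : ℕ)) < s + 1 := (ℓ 0).isLt
          rcases eq_or_ne j 0 with rfl | hj
          · omega
          · have := Fin.lt_def.mp (hm 0 j (Fin.pos_of_ne_zero hj))
            omega⟩ : Fin s))
      (j := fun ℓ' _ => fun j => (ℓ' j).castSucc)
      ?_ ?_ ?_ ?_ ?_
    · intro ℓ hℓ
      have hm := mem_decr.mp (Finset.mem_filter.mp hℓ).1
      exact mem_decr.mpr fun x y hxy => Fin.lt_def.mpr (Fin.lt_def.mp (hm x y hxy))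
    · intro ℓ' hℓ'
      have hm := mem_decr.mp hℓ'
      refine Finset.mem_filter.mpr ⟨mem_decr.mpr fun x y hxy =>
        Fin.castSucc_lt_castSucc_iff.mpr (hm x y hxy), ?_⟩
      simp only [Fin.coe_castSucc]
      exact Nat.ne_of_lt (ℓ' 0).isLt
    · intro ℓ hℓ; funext k; exact Fin.ext (by simp)
    · intro ℓ' hℓ'; funext k; exact Fin.ext (by simp)
    · intro ℓ hℓ
      exact Finset.prod_congr rfl fun j _ => by simp

private lemma decr_zero_sum' {R : Type*} [CommRing R] (s : ℕ)
    (g : (Fin 0 → Fin s) → R) (hg : ∀ ℓ, g ℓ = 1) :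
    ∑ ℓ ∈ DecrSet 0 s, g ℓ = 1 := by
  have h : DecrSet 0 s = Finset.univ := by
    ext ℓ; simp only [mem_decr, Finset.mem_univ, iff_true]; intro x; exact x.elim0
  rw [h, Finset.univ_unique, Finset.sum_singleton, hg]

lemma Pentry {R : Type*} [CommRing R] (m N : ℕ) (α : ℕ → R) (s : ℕ) (k l : Fin N) :
    (((List.range s).map (Lmat R N m α)).prod) k l
      = if (l : ℕ) ≤ (k : ℕ) then
          ∑ ℓ ∈ DecrSet ((k : ℕ) - (l : ℕ)) s,
            ∏ j : Fin ((k : ℕ) - (l : ℕ)), α ((m+1) * ((l : ℕ) + 1 + (j : ℕ)) + (ℓ j : ℕ))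
        else 0 := by
  induction s generalizing l with
  | zero =>
    simp only [List.range_zero, List.map_nil, List.prod_nil, Matrix.one_apply]
    rcases eq_or_ne k l with rfl | hne
    · rw [if_pos rfl, if_pos le_rfl, Nat.sub_self]
      exact (decr_zero_sum 0 (fun a b => α ((m+1)*((k:ℕ)+1+a)+b))).symm
    · rw [if_neg hne]
      rcases le_or_gt (l : ℕ) (k : ℕ) with h | h
      · rw [if_pos h]
        have hd : 0 < (k : ℕ) - (l : ℕ) := by
          have : (k : ℕ) ≠ (l : ℕ) := fun hh => hne (Fin.ext hh)
          omega
        rw [decr_empty hd, Finset.sum_empty]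
      · rw [if_neg (by omega)]
  | succ s ih =>
    rw [List.range_succ, List.map_append, List.prod_append, List.map_singleton,
      List.prod_singleton, Matrix.mul_apply]
    have hL : ∀ j : Fin N, Lmat R N m α s j l
        = (if j = l then (1:R) else 0)
          + (if (j : ℕ) = (l : ℕ) + 1 then α (((l : ℕ)+1)*(m+1)+s) else 0) := by
      intro j
      simp only [Lmat, Matrix.of_apply]
      rcases eq_or_ne ((j : ℕ)) ((l : ℕ)) with h | h
      · have hjl : j = l := Fin.ext h
        subst hjl
        simp
      · have hjl : ¬ j = l := fun hh => h (by rw [hh])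
        rcases eq_or_ne ((j : ℕ)) ((l : ℕ)+1) with h2 | h2
        · simp [h, hjl, h2]
        · simp [h, hjl, h2]
    have hsplit : ∑ j : Fin N, (((List.range s).map (Lmat R N m α)).prod) k j
        * Lmat R N m α s j l
        = (∑ j : Fin N, (((List.range s).map (Lmat R N m α)).prod) k j
            * (if j = l then (1:R) else 0))
          + ∑ j : Fin N, (((List.range s).map (Lmat R N m α)).prod) k j
            * (if (j : ℕ) = (l : ℕ) + 1 then α (((l : ℕ)+1)*(m+1)+s) else 0) := by
      rw [← Finset.sum_add_distrib]
      exact Finset.sum_congr rfl fun j _ => by rw [hL j, mul_add]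
    rw [hsplit]
    have e1 : ∑ j : Fin N, (((List.range s).map (Lmat R N m α)).prod) k j
        * (if j = l then (1:R) else 0)
        = (((List.range s).map (Lmat R N m α)).prod) k l := by
      simp [mul_ite]
    rw [e1]
    rcases lt_or_ge ((k : ℕ)) ((l : ℕ)) with hkl | hkl
    · -- k < l : everything vanishes
      have e2 : ∑ j : Fin N, (((List.range s).map (Lmat R N m α)).prod) k j
          * (if (j : ℕ) = (l : ℕ) + 1 then α (((l : ℕ)+1)*(m+1)+s) else 0) = 0 := by
        refine Finset.sum_eq_zero fun j _ => ?_
        rcases eq_or_ne ((j : ℕ)) ((l : ℕ)+1) with h2 | h2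
        · rw [ih j, if_neg (by omega)]; simp
        · simp [h2]
      rw [e2, ih l, if_neg (by omega), if_neg (by omega), add_zero]
    rcases eq_or_lt_of_le hkl with heq | hlt
    · -- k = l (as naturals)
      have e2 : ∑ j : Fin N, (((List.range s).map (Lmat R N m α)).prod) k j
          * (if (j : ℕ) = (l : ℕ) + 1 then α (((l : ℕ)+1)*(m+1)+s) else 0) = 0 := by
        refine Finset.sum_eq_zero fun j _ => ?_
        rcases eq_or_ne ((j : ℕ)) ((l : ℕ)+1) with h2 | h2
        · rw [ih j, if_neg (by omega)]; simp
        · simp [h2]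
      rw [e2, ih l, if_pos hkl, if_pos hkl, add_zero]
      have hz : (k : ℕ) - (l : ℕ) = 0 := by omega
      rw [hz, decr_zero_sum s (fun a b => α ((m+1)*((l:ℕ)+1+a)+b)),
        decr_zero_sum (s+1) (fun a b => α ((m+1)*((l:ℕ)+1+a)+b))]
    · -- l < k
      have hl1N : (l : ℕ) + 1 < N := by have := k.isLt; omega
      set l1 : Fin N := ⟨(l : ℕ) + 1, hl1N⟩ with hl1
      have e2 : ∑ j : Fin N, (((List.range s).map (Lmat R N m α)).prod) k j
          * (if (j : ℕ) = (l : ℕ) + 1 then α (((l : ℕ)+1)*(m+1)+s) else 0)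
          = (((List.range s).map (Lmat R N m α)).prod) k l1
            * α (((l : ℕ)+1)*(m+1)+s) := by
        rw [Finset.sum_eq_single l1]
        · simp [hl1]
        · intro j _ hj
          have : ¬ ((j : ℕ) = (l : ℕ) + 1) := fun hh => hj (Fin.ext (by simp [hl1, hh]))
          simp [this]
        · intro h; exact absurd (Finset.mem_univ l1) h
      rw [e2, ih l, ih l1, if_pos hkl, if_pos (by simp [hl1]; omega),
        if_pos hkl]
      obtain ⟨d, hd⟩ : ∃ d, (k : ℕ) - (l : ℕ) = d + 1 := ⟨(k:ℕ) - (l:ℕ) - 1, by omega⟩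
      have hd1 : (k : ℕ) - (l1 : ℕ) = d := by simp [hl1]; omega
      rw [hd, hd1, split_sum d s (fun a b => α ((m+1)*((l:ℕ)+1+a)+b))]
      have e3 : ∑ ℓ ∈ DecrSet d s, ∏ j : Fin d, α ((m+1)*((l1:ℕ)+1+(j:ℕ))+(ℓ j : ℕ))
          = ∑ ℓ ∈ DecrSet d s, ∏ j : Fin d, α ((m+1)*((l:ℕ)+1+((j:ℕ)+1))+(ℓ j : ℕ)) := by
        refine Finset.sum_congr rfl fun ℓ _ => Finset.prod_congr rfl fun j _ => ?_
        exact congrArg α (by simp [hl1]; ring)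
      rw [e3]
      have e4 : α ((m+1)*((l:ℕ)+1+0)+s) = α (((l:ℕ)+1)*(m+1)+s) :=
        congrArg α (by ring)
      rw [e4]
      ring

/-- The product `H = L_0 · L_1 ⋯ L_{m-1} · U` is an `(m+2)`-banded unit-lower-Hessenberg
matrix whose entries are `H_{n-1,n} = 1`, `H_{i,n} = 0` for `i ≤ n-2` or `i ≥ n+m+1`, and
`H_{n+k,n} = Σ_{m ≥ ℓ_0 > ⋯ > ℓ_k ≥ 0} ∏_{j=0}^{k} α_{(m+1)(n+j)+ℓ_j}` for `0 ≤ k ≤ m`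
(with the convention `α_i = 0` for `i < m`). -/
theorem stmt3 {R : Type*} [CommRing R] (m : ℕ) (hm : 1 ≤ m) (N : ℕ) (α : ℕ → R)
    (hα0 : ∀ i, i < m → α i = 0) :
    ∀ H : Matrix (Fin N) (Fin N) R,
      H = ((List.range m).map (Lmat R N m α)).prod * Umat R N m α →
      (∀ i n : Fin N, (n : ℕ) = (i : ℕ) + 1 → H i n = 1) ∧
      (∀ i n : Fin N, ((i : ℕ) + 2 ≤ (n : ℕ) ∨ (n : ℕ) + m + 1 ≤ (i : ℕ)) → H i n = 0) ∧
      (∀ n k : ℕ, k ≤ m → ∀ hnk : n + k < N,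
        H ⟨n + k, hnk⟩ ⟨n, by omega⟩
          = ∑ ℓ ∈ Finset.univ.filter
              (fun ℓ : Fin (k + 1) → Fin (m + 1) => ∀ x y, x < y → ℓ y < ℓ x),
              ∏ j : Fin (k + 1), α ((m + 1) * (n + (j : ℕ)) + (ℓ j : ℕ))) := by
  intro H hH
  subst hH
  have hU : ∀ j n : Fin N, Umat R N m α j n
      = (if (n : ℕ) = (j : ℕ) + 1 then (1:R) else 0)
        + (if (j : ℕ) = (n : ℕ) then α ((n : ℕ)*(m+1)+m) else 0) := by
    intro j n
    simp only [Umat, Matrix.of_apply]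
    rcases eq_or_ne ((n:ℕ)) ((j:ℕ)+1) with h | h
    · rw [if_pos h, if_pos h]
      have h2 : ¬ ((j:ℕ) = (n:ℕ)) := by omega
      simp [h2]
    · rw [if_neg h, if_neg h]
      rcases eq_or_ne ((j:ℕ)) ((n:ℕ)) with h2 | h2
      · simp [h2]
      · simp [h2]
  have hHe : ∀ i n : Fin N,
      ((((List.range m).map (Lmat R N m α)).prod) * Umat R N m α) i n
      = (if h : 1 ≤ (n : ℕ) then
          (((List.range m).map (Lmat R N m α)).prod) i ⟨(n:ℕ)-1, by omega⟩ else 0)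
        + (((List.range m).map (Lmat R N m α)).prod) i n * α ((n : ℕ)*(m+1)+m) := by
    intro i n
    rw [Matrix.mul_apply]
    have hsplit : ∑ j : Fin N,
        (((List.range m).map (Lmat R N m α)).prod) i j * Umat R N m α j n
        = (∑ j : Fin N, (((List.range m).map (Lmat R N m α)).prod) i j
            * (if (n : ℕ) = (j : ℕ) + 1 then (1:R) else 0))
          + ∑ j : Fin N, (((List.range m).map (Lmat R N m α)).prod) i j
            * (if (j : ℕ) = (n : ℕ) then α ((n : ℕ)*(m+1)+m) else 0) := by
      rw [← Finset.sum_add_distrib]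
      exact Finset.sum_congr rfl fun j _ => by rw [hU j n, mul_add]
    rw [hsplit]
    congr 1
    · by_cases h : 1 ≤ (n : ℕ)
      · rw [dif_pos h, Finset.sum_eq_single (⟨(n:ℕ)-1, by omega⟩ : Fin N)]
        · have hc : (n : ℕ) = ((⟨(n:ℕ)-1, by omega⟩ : Fin N) : ℕ) + 1 := by
            simp; omega
          rw [if_pos hc, mul_one]
        · intro j _ hj
          have hc : ¬ ((n:ℕ) = (j:ℕ)+1) := by
            intro hh
            exact hj (Fin.ext (show (j:ℕ) = (n:ℕ)-1 by omega))
          simp [hc]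
        · intro hab; exact absurd (Finset.mem_univ _) hab
      · rw [dif_neg h]
        refine Finset.sum_eq_zero fun j _ => ?_
        have hc : ¬ ((n:ℕ) = (j:ℕ)+1) := by omega
        simp [hc]
    · rw [Finset.sum_eq_single n]
      · simp
      · intro j _ hj
        have hc : ¬ ((j:ℕ) = (n:ℕ)) := fun hh => hj (Fin.ext hh)
        simp [hc]
      · intro hab; exact absurd (Finset.mem_univ _) hab
  refine ⟨?_, ?_, ?_⟩
  · -- superdiagonal ones
    intro i n hni
    rw [hHe i n, dif_pos (by omega)]
    rw [Pentry m N α m i ⟨(n:ℕ)-1, by omega⟩, Pentry m N α m i n,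
      if_pos (by simp; omega), if_neg (by omega)]
    have hz : (i : ℕ) - (((⟨(n:ℕ)-1, by omega⟩ : Fin N)) : ℕ) = 0 := by simp; omega
    rw [hz, decr_zero_sum' m _ (fun ℓ => Finset.prod_of_isEmpty _)]
    simp
  · -- zeros
    intro i n hcase
    rw [hHe i n]
    rcases hcase with hc | hc
    · rw [dif_pos (by omega), Pentry m N α m i ⟨(n:ℕ)-1, by omega⟩,
        Pentry m N α m i n, if_neg (by simp; omega), if_neg (by omega)]
      simp
    · by_cases h1 : 1 ≤ (n:ℕ)
      · rw [dif_pos h1, Pentry m N α m i ⟨(n:ℕ)-1, by omega⟩, Pentry m N α m i n,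
          if_pos (by simp; omega), if_pos (by omega),
          decr_empty (show m < (i:ℕ) - (((⟨(n:ℕ)-1, by omega⟩ : Fin N)):ℕ) by simp; omega),
          decr_empty (show m < (i:ℕ) - (n:ℕ) by omega)]
        simp
      · rw [dif_neg h1, Pentry m N α m i n, if_pos (by omega),
          decr_empty (show m < (i:ℕ) - (n:ℕ) by omega)]
        simp
  · -- main band entries
    intro n k hk hnk
    rw [hHe]
    have hsets : (Finset.univ.filter
        (fun ℓ : Fin (k+1) → Fin (m+1) => ∀ x y, x < y → ℓ y < ℓ x))
        = DecrSet (k+1) (m+1) := rfl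
    rw [hsets]
    simp only [Fin.val_mk]
    have key : ∀ (a b : Fin N) (q d : ℕ), (b:ℕ) = q → (a:ℕ) - (b:ℕ) = d →
        (b:ℕ) ≤ (a:ℕ) →
        (((List.range m).map (Lmat R N m α)).prod) a b
          = ∑ ℓ ∈ DecrSet d m, ∏ j : Fin d, α ((m+1)*(q+1+(j:ℕ))+(ℓ j : ℕ)) := by
      intro a b q d hb hd hba
      rw [Pentry m N α m a b, if_pos hba, hd]
      exact Finset.sum_congr rfl fun ℓ _ => Finset.prod_congr rfl fun j _ =>
        congrArg α (by rw [hb])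
    rcases Nat.eq_zero_or_pos n with rfl | hn
    · rw [dif_neg (by simp), zero_add,
        key _ _ 0 k rfl (by simp only [Fin.val_mk]; omega) (by simp only [Fin.val_mk]; omega),
        split_sum k m (fun a b => α ((m+1)*(0+a)+b))]
      have hz : ∑ ℓ ∈ DecrSet (k+1) m,
          ∏ j : Fin (k+1), α ((m+1)*(0+(j:ℕ))+(ℓ j : ℕ)) = 0 := by
        refine Finset.sum_eq_zero fun ℓ _ => ?_
        refine Finset.prod_eq_zero (Finset.mem_univ (0 : Fin (k+1))) ?_
        exact hα0 _ (by simpa using (ℓ 0).isLt)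
      rw [hz, add_zero]
      have e5 : ∑ ℓ ∈ DecrSet k m, ∏ j : Fin k, α ((m+1)*(0+((j:ℕ)+1))+(ℓ j : ℕ))
          = ∑ ℓ ∈ DecrSet k m, ∏ j : Fin k, α ((m+1)*(0+1+(j:ℕ))+(ℓ j : ℕ)) :=
        Finset.sum_congr rfl fun ℓ _ => Finset.prod_congr rfl fun j _ =>
          congrArg α (by ring)
      rw [e5, mul_comm]
      congr 2
      simp
    · obtain ⟨p, rfl⟩ : ∃ p, n = p + 1 := ⟨n - 1, by omega⟩
      rw [dif_pos (by simp),
        key _ _ p (k+1) rfl (by simp only [Fin.val_mk]; omega)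
          (by simp only [Fin.val_mk]; omega),
        key _ _ (p+1) k rfl (by simp only [Fin.val_mk]; omega)
          (by simp only [Fin.val_mk]; omega),
        split_sum k m (fun a b => α ((m+1)*((p+1)+a)+b))]
      ring_nf
end

section
/- Let R be a commutative ring and H = (h_{n,k})_{n,k∈ℕ} a unit-lower-Hessenberg matrix over R, i.e. h_{n,n+1} = 1 for all n and h_{n,k} = 0 whenever k ≥ n+2. Define the polynomial sequence (P_n)_{n∈ℕ} in R[x] by P_0(x) = 1 and P_{n+1}(x) = x·P_n(x) − Σ_{k=0}^{n} h_{n,k}·P_k(x). Then for every n ≥ 1, P_n is the characteristic polynomial of the n×n truncation H_n = (h_{i,j})_{0≤i,j≤n−1}; that is, P_n(x) = det(x·I_n − H_n). In particular each P_n is monic of degree n. -/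
open Polynomial

section aux
variable {R : Type*} [CommRing R]

/-- Truncation of `h` to an `m+1` sized square matrix, whose last row is replaced by
row `n` of `h`, entries of the char-matrix form. -/
noncomputable def Bm (h : ℕ → ℕ → R) (n m : ℕ) : Matrix (Fin (m+1)) (Fin (m+1)) R[X] :=
  Matrix.of fun i j =>
    (if (if (i:ℕ) = m then n else (i:ℕ)) = (j:ℕ) then X else 0)
      - C (h (if (i:ℕ) = m then n else (i:ℕ)) (j:ℕ))

lemma charmatrix_trunc (h : ℕ → ℕ → R) (k : ℕ) :
    Matrix.charmatrix (Matrix.of fun i j : Fin k => h (i:ℕ) (j:ℕ))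
      = Matrix.of (fun i j : Fin k =>
          (if (i:ℕ) = (j:ℕ) then X else 0) - C (h (i:ℕ) (j:ℕ))) := by
  ext i j
  rw [Matrix.charmatrix_apply]
  simp [Matrix.diagonal_apply, Fin.ext_iff]

lemma Bm_det (h : ℕ → ℕ → R) (hsup : ∀ n, h n (n + 1) = 1)
    (hband : ∀ n k, n + 2 ≤ k → h n k = 0)
    (P : ℕ → R[X]) (hP0 : P 0 = 1) (n : ℕ)
    (hch : ∀ k, 1 ≤ k → k ≤ n →
      P k = Matrix.charpoly (Matrix.of fun i j : Fin k => h (i:ℕ) (j:ℕ))) :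
    ∀ m, m ≤ n → (Bm h n m).det
      = (if m = n then X * P n else 0) - ∑ k ∈ Finset.range (m+1), C (h n k) * P k := by
  intro m
  induction m with
  | zero =>
    intro _
    rw [Matrix.det_fin_one]
    have e : Bm h n 0 0 0 = (if n = 0 then X else 0) - C (h n 0) := by
      simp [Bm]
    rw [e, Finset.sum_range_one]
    by_cases hn : n = 0
    · subst hn
      simp [hP0]
    · rw [if_neg hn, if_neg (fun hh => hn hh.symm)]
      simp [hP0]
  | succ m ih =>
    intro hmn
    have hmn' : m ≤ n := le_of_lt (Nat.lt_of_lt_of_le (Nat.lt_succ_self m) hmn)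
    rw [Matrix.det_succ_column (Bm h n (m+1)) (Fin.last (m+1))]
    rw [Fin.sum_univ_castSucc, Fin.sum_univ_castSucc]
    have hz : ∀ i : Fin m,
        (-1) ^ ((Fin.castSucc (Fin.castSucc i) : ℕ) + ((Fin.last (m+1)) : ℕ))
          * Bm h n (m+1) (Fin.castSucc (Fin.castSucc i)) (Fin.last (m+1))
          * ((Bm h n (m+1)).submatrix (Fin.castSucc (Fin.castSucc i)).succAbove
              (Fin.last (m+1)).succAbove).det = 0 := by
      intro i
      have hiv : ((Fin.castSucc (Fin.castSucc i) : Fin (m+2)) : ℕ) = (i : ℕ) := rfl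
      have h1 : Bm h n (m+1) (Fin.castSucc (Fin.castSucc i)) (Fin.last (m+1)) = 0 := by
        have hi : (i : ℕ) ≠ m + 1 := by omega
        have hi2 : (i : ℕ) ≠ m + 1 := hi
        simp only [Bm, Matrix.of_apply, hiv, Fin.val_last, if_neg hi, if_neg hi2,
          hband (i:ℕ) (m+1) (by omega), map_zero, zero_sub, neg_zero]
      rw [h1]; ring
    rw [Finset.sum_congr rfl (fun i _ => hz i), Finset.sum_const_zero, zero_add]
    -- the two remaining terms
    have hrow1 : Bm h n (m+1) (Fin.castSucc (Fin.last m)) (Fin.last (m+1)) = -1 := by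
      have hv : ((Fin.castSucc (Fin.last m) : Fin (m+2)) : ℕ) = m := rfl
      simp only [Bm, Matrix.of_apply, hv, Fin.val_last, if_neg (by omega : ¬ m = m + 1),
        hsup m, map_one]
      simp [if_neg (by omega : ¬ m = m + 1)]
    have hsub1 : (Bm h n (m+1)).submatrix (Fin.castSucc (Fin.last m)).succAbove
        (Fin.last (m+1)).succAbove = Bm h n m := by
      ext r c
      have hc : (((Fin.last (m+1)).succAbove c : Fin (m+2)) : ℕ) = (c : ℕ) := by
        rw [Fin.succAbove_last]; rfl
      have hr : (((Fin.castSucc (Fin.last m)).succAbove r : Fin (m+2)) : ℕ)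
          = if (r : ℕ) < m then (r : ℕ) else (r : ℕ) + 1 := by
        rw [Fin.succAbove]
        split
        · rename_i hh
          rw [if_pos]; · rfl
          · simpa [Fin.lt_def] using hh
        · rename_i hh
          rw [if_neg]; · rfl
          · simpa [Fin.lt_def] using hh
      simp only [Matrix.submatrix_apply, Bm, Matrix.of_apply, hc, hr]
      by_cases hrm : (r : ℕ) < m
      · rw [if_pos hrm]
        have : ¬ (r : ℕ) = m + 1 := by omega
        have h2 : ¬ (r : ℕ) = m := by omega
        rw [if_neg this, if_neg h2]
      · have hrm' : (r : ℕ) = m := by omega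
        rw [if_neg hrm, hrm']
        simp
    have hsub2 : (Bm h n (m+1)).submatrix (Fin.last (m+1)).succAbove
        (Fin.last (m+1)).succAbove
        = Matrix.charmatrix (Matrix.of fun i j : Fin (m+1) => h (i:ℕ) (j:ℕ)) := by
      rw [charmatrix_trunc]
      ext r c
      have hc : (((Fin.last (m+1)).succAbove c : Fin (m+2)) : ℕ) = (c : ℕ) := by
        rw [Fin.succAbove_last]; rfl
      have hr : (((Fin.last (m+1)).succAbove r : Fin (m+2)) : ℕ) = (r : ℕ) := by
        rw [Fin.succAbove_last]; rfl
      simp only [Matrix.submatrix_apply, Bm, Matrix.of_apply, hc, hr,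
        if_neg (by omega : ¬ (r:ℕ) = m + 1)]
    have hlastlast : Bm h n (m+1) (Fin.last (m+1)) (Fin.last (m+1))
        = (if n = m + 1 then X else 0) - C (h n (m+1)) := by
      simp [Bm]
    have hsign1 : ((-1 : R[X])) ^ (((Fin.castSucc (Fin.last m) : Fin (m+2)) : ℕ)
        + ((Fin.last (m+1) : Fin (m+2)) : ℕ)) = -1 := by
      have : ((Fin.castSucc (Fin.last m) : Fin (m+2)) : ℕ)
          + ((Fin.last (m+1) : Fin (m+2)) : ℕ) = 2 * m + 1 := by simp; omega
      rw [this, pow_succ, pow_mul]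
      simp
    have hsign2 : ((-1 : R[X])) ^ (((Fin.last (m+1) : Fin (m+2)) : ℕ)
        + ((Fin.last (m+1) : Fin (m+2)) : ℕ)) = 1 := by
      rw [← two_mul, pow_mul]
      simp
    rw [hsign1, hsign2, hrow1, hsub1, hsub2, hlastlast, ih hmn',
      show (Matrix.of fun i j : Fin (m+1) => h (i:ℕ) (j:ℕ)).charmatrix.det = P (m+1) from
        (hch (m+1) (by omega) hmn).symm,
      if_neg (by omega : ¬ m = n),
      Finset.sum_range_succ (fun k => C (h n k) * P k) (m+1)]
    by_cases hfin : m + 1 = n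
    · subst hfin
      rw [if_pos rfl, if_pos rfl]
      ring
    · rw [if_neg hfin, if_neg (fun hh => hfin hh.symm)]
      ring

end aux

/-- For a unit-lower-Hessenberg matrix `H = (h_{n,k})` over a commutative ring, the monic
polynomials defined by `P_0 = 1` and `P_{n+1}(x) = x·P_n(x) − Σ_{k=0}^{n} h_{n,k}·P_k(x)`
are the characteristic polynomials of the truncations `H_n`:
`P_n(x) = det(x·I_n − H_n)`; in particular each `P_n` is monic of degree `n`. -/
theorem stmt4 {R : Type*} [CommRing R] [Nontrivial R]
    (h : ℕ → ℕ → R)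
    (hsup : ∀ n, h n (n + 1) = 1)
    (hband : ∀ n k, n + 2 ≤ k → h n k = 0)
    (P : ℕ → Polynomial R) (hP0 : P 0 = 1)
    (hPrec : ∀ n, P (n + 1)
      = X * P n - ∑ k ∈ Finset.range (n + 1), C (h n k) * P k) :
    (∀ n : ℕ, 1 ≤ n →
      P n = Matrix.charpoly (Matrix.of fun i j : Fin n => h (i : ℕ) (j : ℕ))) ∧
    (∀ n : ℕ, (P n).Monic ∧ (P n).natDegree = n) := by
  have main : ∀ n : ℕ, 1 ≤ n →
      P n = Matrix.charpoly (Matrix.of fun i j : Fin n => h (i : ℕ) (j : ℕ)) := by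
    intro n
    induction n using Nat.strong_induction_on with
    | _ n IH =>
      intro hn
      obtain ⟨m, rfl⟩ : ∃ m, n = m + 1 := ⟨n - 1, by omega⟩
      have hch : ∀ k, 1 ≤ k → k ≤ m →
          P k = Matrix.charpoly (Matrix.of fun i j : Fin k => h (i:ℕ) (j:ℕ)) := by
        intro k hk1 hk2
        exact IH k (by omega) hk1
      have hB : Matrix.charpoly (Matrix.of fun i j : Fin (m+1) => h (i:ℕ) (j:ℕ))
          = (Bm h m m).det := by
        unfold Matrix.charpoly
        congr 1
        rw [charmatrix_trunc]
        ext i j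
        have : ¬ ((i : ℕ) = m ∧ (i:ℕ) ≠ m) := by tauto
        simp only [Bm, Matrix.of_apply]
        by_cases hi : (i : ℕ) = m
        · rw [if_pos hi, hi]
        · rw [if_neg hi]
      rw [hB, Bm_det h hsup hband P hP0 m hch m le_rfl, if_pos rfl, hPrec m]
  refine ⟨main, ?_⟩
  intro n
  cases n with
  | zero => simp [hP0]
  | succ m =>
    rw [main (m+1) (by omega)]
    exact ⟨Matrix.charpoly_monic _, by simp⟩
end

section
/- Let m ≥ 1 and let (P_n)_{n∈ℕ} be the monic real polynomials defined by P_0(x) = 1 and P_{n+1}(x) = x·P_n(x) − Σ_{k=0}^{min(n,m)} γ_{n−k}^{[k]}·P_{n−k}(x), where all γ_n^{[k]} ∈ ℝ and γ_n^{[m]} > 0 for all n. Suppose there exist real constants γ^{[m]} > 0 and γ^{[k]} ≥ 0 for 0 ≤ k ≤ m−1, a nondecreasing unbounded sequence of positive reals (f_n), and for each 0 ≤ k ≤ m a sequence (ε_n^{(k)}) with ε_n^{(k)}/f_n^{k+1} → 0 as n → ∞, such that |γ_n^{[k]}| ≤ γ^{[k]}·f_n^{k+1} + ε_n^{(k)}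 for all n. Let C = inf_{t > 0} ( t + Σ_{k=0}^{m} γ^{[k]}·t^{−k} ). Then the largest modulus of a complex root of P_n is at most C·f_n + o(f_n): there exists a sequence (e_n) with e_n/f_n → 0 such that every complex root z of P_n satisfies |z| ≤ C·f_n + e_n. -/
open Polynomial Filter

lemma growth (m : ℕ) (γ : ℕ → ℕ → ℝ) (P : ℕ → Polynomial ℝ) (hP0 : P 0 = 1)
    (hPrec : ∀ n, P (n + 1) = X * P n
      - ∑ k ∈ Finset.range (min n m + 1), C (γ (n - k) k) * P (n - k))
    (d : ℝ) (hd : 0 < d) (z : ℂ) (n : ℕ)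
    (hz : ∀ j < n, d + (∑ k ∈ Finset.range (min j m + 1), |γ (j - k) k| / d ^ k)
      ≤ ‖z‖) :
    ∀ j ≤ n, ∀ i ≤ j,
      d ^ (j - i) * ‖aeval z (P i)‖ ≤ ‖aeval z (P j)‖ := by
  intro j
  induction j with
  | zero => intro _ i hi; interval_cases i; simp
  | succ j ih =>
    intro hj i hi
    have hjn : j ≤ n := le_of_lt (lt_of_lt_of_le (Nat.lt_succ_self j) hj)
    -- key step
    have heval : (aeval z (P (j + 1)) : ℂ) = z * aeval z (P j) -
        ∑ k ∈ Finset.range (min j m + 1), (γ (j - k) k : ℂ) * aeval z (P (j - k)) := by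
      rw [hPrec j]
      simp [map_sub, map_sum, map_mul, aeval_X, aeval_C, Complex.coe_algebraMap]
    have hsum : ‖∑ k ∈ Finset.range (min j m + 1),
        (γ (j - k) k : ℂ) * aeval z (P (j - k))‖
        ≤ (∑ k ∈ Finset.range (min j m + 1), |γ (j - k) k| / d ^ k)
            * ‖aeval z (P j)‖ := by
      refine le_trans (norm_sum_le _ _) ?_
      rw [Finset.sum_mul]
      refine Finset.sum_le_sum fun k hk => ?_
      have hkj : k ≤ j := le_trans (Nat.lt_succ_iff.mp (Finset.mem_range.mp hk))
        (min_le_left _ _)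
      have hih := ih hjn (j - k) (Nat.sub_le _ _)
      rw [Nat.sub_sub_self hkj] at hih
      have hdk : (0:ℝ) < d ^ k := pow_pos hd k
      rw [norm_mul, Complex.norm_real, Real.norm_eq_abs]
      rw [div_mul_eq_mul_div, le_div_iff₀ hdk]
      calc |γ (j - k) k| * ‖aeval z (P (j - k))‖ * d ^ k
          = |γ (j - k) k| * (d ^ k * ‖aeval z (P (j - k))‖) := by ring
        _ ≤ |γ (j - k) k| * ‖aeval z (P j)‖ :=
            mul_le_mul_of_nonneg_left hih (abs_nonneg _)
    have hstep : d * ‖aeval z (P j)‖ ≤ ‖aeval z (P (j + 1))‖ := by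
      have hz' := hz j (lt_of_lt_of_le (Nat.lt_succ_self j) hj)
      calc d * ‖aeval z (P j)‖
          ≤ (‖z‖ - ∑ k ∈ Finset.range (min j m + 1), |γ (j - k) k| / d ^ k)
              * ‖aeval z (P j)‖ := by
            apply mul_le_mul_of_nonneg_right _ (norm_nonneg _)
            linarith
        _ = ‖z‖ * ‖aeval z (P j)‖
            - (∑ k ∈ Finset.range (min j m + 1), |γ (j - k) k| / d ^ k)
              * ‖aeval z (P j)‖ := by ring
        _ ≤ ‖z * aeval z (P j)‖
            - ‖∑ k ∈ Finset.range (min j m + 1),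
                (γ (j - k) k : ℂ) * aeval z (P (j - k))‖ := by
            rw [norm_mul]; linarith
        _ ≤ ‖aeval z (P (j + 1))‖ := by
            rw [heval]
            exact norm_sub_norm_le _ _
    rcases Nat.eq_or_lt_of_le hi with rfl | hi'
    · simp
    · have hij : i ≤ j := Nat.lt_succ_iff.mp hi'
      have : j + 1 - i = (j - i) + 1 := by omega
      rw [this, pow_succ]
      calc d ^ (j - i) * d * ‖aeval z (P i)‖
          = d * (d ^ (j - i) * ‖aeval z (P i)‖) := by ring
        _ ≤ d * ‖aeval z (P j)‖ :=
            mul_le_mul_of_nonneg_left (ih hjn i hij) hd.le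
        _ ≤ _ := hstep

lemma Pmonic (m : ℕ) (γ : ℕ → ℕ → ℝ) (P : ℕ → Polynomial ℝ) (hP0 : P 0 = 1)
    (hPrec : ∀ n, P (n + 1) = X * P n
      - ∑ k ∈ Finset.range (min n m + 1), C (γ (n - k) k) * P (n - k)) :
    ∀ n, (P n).Monic ∧ (P n).degree = n := by
  intro n
  induction n using Nat.strong_induction_on with
  | _ n ih =>
    match n with
    | 0 => rw [hP0]; exact ⟨monic_one, degree_one⟩
    | n + 1 =>
      have hmon : (X * P n).Monic := (monic_X).mul (ih n (Nat.lt_succ_self n)).1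
      have hdeg : (X * P n).degree = ((n + 1 : ℕ) : WithBot ℕ) := by
        rw [degree_mul, degree_X, (ih n (Nat.lt_succ_self n)).2]
        push_cast
        ring
      have hS : (∑ k ∈ Finset.range (min n m + 1), C (γ (n - k) k) * P (n - k)).degree
          < ((n + 1 : ℕ) : WithBot ℕ) := by
        refine lt_of_le_of_lt (degree_sum_le _ _) ?_
        rw [Finset.sup_lt_iff (by exact_mod_cast WithBot.bot_lt_coe _)]
        intro k _
        rw [← smul_eq_C_mul]
        refine lt_of_le_of_lt (degree_smul_le _ _) ?_
        rw [(ih (n - k) (by omega)).2]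
        exact_mod_cast Nat.lt_succ_of_le (Nat.sub_le _ _)
      have h1 : P (n + 1) = X * P n + -(∑ k ∈ Finset.range (min n m + 1),
          C (γ (n - k) k) * P (n - k)) := by rw [hPrec n]; ring
      constructor
      · rw [h1]; exact hmon.add_of_left (by rw [degree_neg, hdeg]; exact hS)
      · rw [h1, degree_add_eq_left_of_degree_lt (by rw [degree_neg, hdeg]; exact hS), hdeg]

/-- Upper bound for the largest zero (in modulus) of an `m`-orthogonal polynomial sequence
from the asymptotic behaviour of its recurrence coefficients: if
`|γ_n^{[k]}| ≤ γ^{[k]}·f_n^{k+1} + o(f_n^{k+1})` for a nondecreasing unbounded positive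
sequence `(f_n)`, then every root `z` of `P_n` satisfies
`|z| ≤ (inf_{t>0} (t + Σ_{k=0}^{m} γ^{[k]}·t^{−k}))·f_n + o(f_n)`. -/
theorem stmt7 (m : ℕ) (hm : 1 ≤ m)
    (γ : ℕ → ℕ → ℝ) (hγm : ∀ n, 0 < γ n m)
    (P : ℕ → Polynomial ℝ) (hP0 : P 0 = 1)
    (hPrec : ∀ n, P (n + 1) = X * P n
      - ∑ k ∈ Finset.range (min n m + 1), C (γ (n - k) k) * P (n - k))
    (Γ : ℕ → ℝ) (hΓm : 0 < Γ m) (hΓ : ∀ k, k < m → 0 ≤ Γ k)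
    (f : ℕ → ℝ) (hfpos : ∀ n, 0 < f n) (hfmono : Monotone f)
    (hfunb : ∀ M : ℝ, ∃ n, M < f n)
    (ε : ℕ → ℕ → ℝ)
    (hε : ∀ k, k ≤ m →
      Tendsto (fun n => ε k n / (f n) ^ (k + 1)) atTop (nhds 0))
    (hbound : ∀ n k, k ≤ m → |γ n k| ≤ Γ k * (f n) ^ (k + 1) + ε k n) :
    ∃ e : ℕ → ℝ, Tendsto (fun n => e n / f n) atTop (nhds 0) ∧
      ∀ n, ∀ z : ℂ, Polynomial.aeval z (P n) = 0 →
        ‖z‖ ≤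
          (sInf {y : ℝ | ∃ t : ℝ, 0 < t ∧
            y = t + ∑ k ∈ Finset.range (m + 1), Γ k / t ^ k}) * f n + e n := by
  have hΓnn : ∀ k ≤ m, 0 ≤ Γ k := by
    intro k hk
    rcases Nat.lt_or_ge k m with h | h
    · exact hΓ k h
    · have : k = m := le_antisymm hk h
      exact this ▸ hΓm.le
  set g : ℝ → ℝ := fun t => t + ∑ k ∈ Finset.range (m + 1), Γ k / t ^ k with hg
  set S : Set ℝ := {y : ℝ | ∃ t : ℝ, 0 < t ∧
      y = t + ∑ k ∈ Finset.range (m + 1), Γ k / t ^ k} with hSdef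
  have hgpos : ∀ t : ℝ, 0 < t → 0 < g t := by
    intro t ht
    have : 0 ≤ ∑ k ∈ Finset.range (m + 1), Γ k / t ^ k :=
      Finset.sum_nonneg fun k hk => div_nonneg
        (hΓnn k (Nat.lt_succ_iff.mp (Finset.mem_range.mp hk))) (pow_pos ht k).le
    simp only [hg]; linarith
  have hSne : S.Nonempty := ⟨g 1, 1, one_pos, rfl⟩
  have hSbd : BddBelow S := ⟨0, fun y hy => by
    obtain ⟨t, ht, rfl⟩ := hy; exact (hgpos t ht).le⟩
  set Cf : ℝ := sInf S with hCf
  have hCle : ∀ t : ℝ, 0 < t → Cf ≤ g t := fun t ht => csInf_le hSbd ⟨t, ht, rfl⟩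
  -- finiteness of roots, M and e
  have hPn0 : ∀ n, P n ≠ 0 := fun n => (Pmonic m γ P hP0 hPrec n).1.ne_zero
  have hfin : ∀ n, {z : ℂ | aeval z (P n) = 0}.Finite := by
    intro n
    have hmap : ((P n).map (algebraMap ℝ ℂ)) ≠ 0 :=
      ((Pmonic m γ P hP0 hPrec n).1.map _).ne_zero
    have : {z : ℂ | aeval z (P n) = 0} = {z : ℂ | IsRoot ((P n).map (algebraMap ℝ ℂ)) z} := by
      ext z; simp [IsRoot, aeval_def, eval_map]
    rw [this]
    exact finite_setOf_isRoot hmap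
  set M : ℕ → ℝ := fun n => sSup (insert 0 ((‖·‖) '' {z : ℂ | aeval z (P n) = 0}))
    with hM
  have hMbdd : ∀ n, BddAbove (insert 0 ((‖·‖) '' {z : ℂ | aeval z (P n) = 0})) :=
    fun n => (((hfin n).image _).insert 0).bddAbove
  set e : ℕ → ℝ := fun n => max (M n - Cf * f n) 0 with he
  have hroot : ∀ n, ∀ z : ℂ, aeval z (P n) = 0 → ‖z‖ ≤ M n := by
    intro n z hz
    exact le_csSup (hMbdd n) (Set.mem_insert_of_mem _ ⟨z, hz, rfl⟩)
  refine ⟨e, ?_, ?_⟩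
  swap
  · intro n z hz
    have h1 : ‖z‖ ≤ M n := hroot n z hz
    have h2 : M n - Cf * f n ≤ e n := le_max_left _ _
    linarith
  -- the quantitative bound
  set A : ℕ → ℕ → ℝ := fun k n =>
    (Finset.range (n + 1)).sup' Finset.nonempty_range_add_one fun i => |ε k i| with hA
  have hAnn : ∀ k n, 0 ≤ A k n := by
    intro k n
    simp only [hA]
    exact (abs_nonneg (ε k 0)).trans
      (Finset.le_sup' (fun i => |ε k i|) (Finset.mem_range.mpr (Nat.succ_pos n)))
  have hAle : ∀ k i n, i ≤ n → |ε k i| ≤ A k n := by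
    intro k i n hi
    simp only [hA]
    exact Finset.le_sup' (fun i => |ε k i|) (Finset.mem_range.mpr (Nat.lt_succ_of_le hi))
  have hftop : Tendsto f atTop atTop := by
    apply tendsto_atTop_atTop_of_monotone hfmono
    intro b; exact (hfunb b).imp fun n h => h.le
  -- A k n / f n ^ (k+1) → 0
  have hAtend : ∀ k, k ≤ m → Tendsto (fun n => A k n / f n ^ (k + 1)) atTop (nhds 0) := by
    intro k hk
    rw [Metric.tendsto_atTop]
    intro δ hδ
    obtain ⟨N₁, hN₁⟩ := (Metric.tendsto_atTop.mp (hε k hk)) (δ / 2) (by linarith)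
    have hεle : ∀ i, N₁ ≤ i → |ε k i| ≤ δ / 2 * f i ^ (k + 1) := by
      intro i hi
      have := hN₁ i hi
      rw [Real.dist_eq, sub_zero, abs_div, abs_of_pos (pow_pos (hfpos i) (k + 1))] at this
      have hp : (0:ℝ) < f i ^ (k + 1) := pow_pos (hfpos i) (k + 1)
      rw [div_lt_iff₀ hp] at this
      linarith
    have hBev : ∀ᶠ n in atTop, A k N₁ ≤ δ / 2 * f n ^ (k + 1) := by
      have h1 : ∀ᶠ n in atTop, max 1 (2 / δ * A k N₁) ≤ f n := hftop.eventually_ge_atTop _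
      filter_upwards [h1] with n hn
      have hf1 : (1:ℝ) ≤ f n := le_trans (le_max_left _ _) hn
      have hfk : f n ≤ f n ^ (k + 1) := le_self_pow₀ hf1 (Nat.succ_ne_zero k)
      have h2 : 2 / δ * A k N₁ ≤ f n := le_trans (le_max_right _ _) hn
      have : A k N₁ ≤ δ / 2 * f n := by
        have h4 := mul_le_mul_of_nonneg_left h2 (half_pos hδ).le
        have h5 : δ / 2 * (2 / δ * A k N₁) = A k N₁ := by field_simp
        linarith [h4, h5.symm.le, h5.le]
      nlinarith [hAnn k N₁, hfpos n]
    obtain ⟨N₂, hN₂⟩ := eventually_atTop.mp hBev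
    refine ⟨max N₁ N₂, fun n hn => ?_⟩
    have hn1 : N₁ ≤ n := le_trans (le_max_left _ _) hn
    have hn2 : N₂ ≤ n := le_trans (le_max_right _ _) hn
    have hAbound : A k n ≤ δ / 2 * f n ^ (k + 1) := by
      apply Finset.sup'_le
      intro i hi
      have hi' : i ≤ n := Nat.lt_succ_iff.mp (Finset.mem_range.mp hi)
      rcases Nat.lt_or_ge i N₁ with h | h
      · exact le_trans (hAle k i N₁ h.le) (hN₂ n hn2)
      · refine le_trans (hεle i h) ?_
        have : f i ^ (k + 1) ≤ f n ^ (k + 1) :=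
          pow_le_pow_left₀ (hfpos i).le (hfmono hi') (k + 1)
        nlinarith
    have hp : (0:ℝ) < f n ^ (k + 1) := pow_pos (hfpos n) (k + 1)
    rw [Real.dist_eq, sub_zero, abs_of_nonneg (div_nonneg (hAnn k n) hp.le), div_lt_iff₀ hp]
    nlinarith
  -- main quantitative bound on M
  have hMbound : ∀ t : ℝ, 0 < t → ∀ n,
      M n ≤ g t * f n + ∑ k ∈ Finset.range (m + 1), A k n / (t * f n) ^ k := by
    intro t ht n
    have hdn : (0:ℝ) < t * f n := mul_pos ht (hfpos n)
    have hEnn : 0 ≤ ∑ k ∈ Finset.range (m + 1), A k n / (t * f n) ^ k :=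
      Finset.sum_nonneg fun k _ => div_nonneg (hAnn k n) (pow_pos hdn k).le
    have hRHSnn : 0 ≤ g t * f n + ∑ k ∈ Finset.range (m + 1), A k n / (t * f n) ^ k := by
      exact add_nonneg (mul_pos (hgpos t ht) (hfpos n)).le hEnn
    apply Real.sSup_le _ hRHSnn
    rintro x (rfl | ⟨z, hz, rfl⟩)
    · exact hRHSnn
    by_contra hcon
    push_neg at hcon
    have hzge : ∀ j < n, t * f n + (∑ k ∈ Finset.range (min j m + 1),
        |γ (j - k) k| / (t * f n) ^ k) ≤ ‖z‖ := by
      intro j hj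
      have hstep : ∑ k ∈ Finset.range (min j m + 1), |γ (j - k) k| / (t * f n) ^ k
          ≤ ∑ k ∈ Finset.range (m + 1), (Γ k * f n / t ^ k + A k n / (t * f n) ^ k) := by
        refine le_trans (Finset.sum_le_sum ?_) (Finset.sum_le_sum_of_subset_of_nonneg ?_ ?_)
        · intro k hk
          have hkm : k ≤ m := le_trans (Nat.lt_succ_iff.mp (Finset.mem_range.mp hk))
            (min_le_right _ _)
          have hkj : k ≤ j := le_trans (Nat.lt_succ_iff.mp (Finset.mem_range.mp hk))
            (min_le_left _ _)
          have hjkn : j - k ≤ n := le_trans (Nat.sub_le _ _) hj.le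
          have h1 : |γ (j - k) k| ≤ Γ k * f n ^ (k + 1) + A k n := by
            refine le_trans (hbound (j - k) k hkm) ?_
            have h2 : f (j - k) ^ (k + 1) ≤ f n ^ (k + 1) :=
              pow_le_pow_left₀ (hfpos _).le (hfmono hjkn) (k + 1)
            have h3 : ε k (j - k) ≤ A k n := le_trans (le_abs_self _) (hAle k _ n hjkn)
            have := hΓnn k hkm
            nlinarith
          have hpk : (0:ℝ) < (t * f n) ^ k := pow_pos hdn k
          rw [div_le_iff₀ hpk] at *
          have heq : (Γ k * f n / t ^ k + A k n / (t * f n) ^ k) * (t * f n) ^ k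
              = Γ k * f n ^ (k + 1) + A k n := by
            rw [add_mul, div_mul_cancel₀ _ hpk.ne', mul_pow, div_mul_eq_mul_div, mul_div_assoc,
              mul_div_cancel_left₀ _ (pow_pos ht k).ne']
            ring
          rw [heq]
          exact h1
        · intro k hk
          exact Finset.mem_range.mpr (lt_of_lt_of_le (Finset.mem_range.mp hk)
            (by omega))
        · intro k hk _
          have hkm : k ≤ m := Nat.lt_succ_iff.mp (Finset.mem_range.mp hk)
          have h0 := hΓnn k hkm
          exact add_nonneg (div_nonneg (mul_nonneg h0 (hfpos n).le) (pow_nonneg ht.le k))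
            (div_nonneg (hAnn k n) (pow_nonneg hdn.le k))
      have hsum_eq : ∑ k ∈ Finset.range (m + 1), (Γ k * f n / t ^ k + A k n / (t * f n) ^ k)
          = (∑ k ∈ Finset.range (m + 1), Γ k / t ^ k) * f n
            + ∑ k ∈ Finset.range (m + 1), A k n / (t * f n) ^ k := by
        rw [Finset.sum_add_distrib, Finset.sum_mul]
        congr 1
        refine Finset.sum_congr rfl fun k _ => ?_
        ring
      have : t * f n + (∑ k ∈ Finset.range (min j m + 1), |γ (j - k) k| / (t * f n) ^ k)
          ≤ g t * f n + ∑ k ∈ Finset.range (m + 1), A k n / (t * f n) ^ k := by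
        simp only [hg]
        rw [add_mul]
        calc t * f n + ∑ k ∈ Finset.range (min j m + 1), |γ (j - k) k| / (t * f n) ^ k
            ≤ t * f n + ∑ k ∈ Finset.range (m + 1),
                (Γ k * f n / t ^ k + A k n / (t * f n) ^ k) := by linarith
          _ = t * f n + ((∑ k ∈ Finset.range (m + 1), Γ k / t ^ k) * f n
                + ∑ k ∈ Finset.range (m + 1), A k n / (t * f n) ^ k) := by rw [hsum_eq]
          _ = _ := by ring
      linarith
    have hgrow := growth m γ P hP0 hPrec (t * f n) hdn z n hzge n le_rfl 0 (Nat.zero_le n)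
    rw [hP0] at hgrow
    simp only [map_one, norm_one, Nat.sub_zero] at hgrow
    rw [hz] at hgrow
    simp only [map_zero, norm_zero, map_one, mul_one] at hgrow
    exact absurd hgrow (not_le.mpr (pow_pos hdn n))
  -- final tendsto
  rw [Metric.tendsto_atTop]
  intro δ hδ
  -- pick t with g t < Cf + δ/4
  have hlt : Cf < Cf + δ / 4 := by linarith
  obtain ⟨y, hyS, hylt⟩ := (csInf_lt_iff hSbd hSne).mp (lt_of_eq_of_lt hCf.symm hlt)
  obtain ⟨t, ht, rfl⟩ := hyS
  have hgt : g t < Cf + δ / 4 := hylt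
  -- the error term tends to 0
  have hEtend : Tendsto (fun n => (∑ k ∈ Finset.range (m + 1),
      A k n / (t * f n) ^ k) / f n) atTop (nhds 0) := by
    have heq : ∀ n, (∑ k ∈ Finset.range (m + 1), A k n / (t * f n) ^ k) / f n
        = ∑ k ∈ Finset.range (m + 1), A k n / f n ^ (k + 1) * (t ^ k)⁻¹ := by
      intro n
      rw [Finset.sum_div]
      refine Finset.sum_congr rfl fun k _ => ?_
      rw [mul_pow, div_div, mul_assoc, ← pow_succ, mul_comm (t ^ k), ← div_div,
        div_eq_mul_inv]
    simp only [heq]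
    have : Tendsto (fun n => ∑ k ∈ Finset.range (m + 1),
        A k n / f n ^ (k + 1) * (t ^ k)⁻¹) atTop
        (nhds (∑ k ∈ Finset.range (m + 1), (0:ℝ))) := by
      refine tendsto_finset_sum _ fun k hk => ?_
      have hkm : k ≤ m := Nat.lt_succ_iff.mp (Finset.mem_range.mp hk)
      simpa using (hAtend k hkm).mul_const (t ^ k)⁻¹
    simpa using this
  have hEev : ∀ᶠ n in atTop, (∑ k ∈ Finset.range (m + 1),
      A k n / (t * f n) ^ k) / f n < δ / 4 := by
    have := (Metric.tendsto_atTop.mp hEtend) (δ / 4) (by linarith)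
    obtain ⟨N, hN⟩ := this
    refine eventually_atTop.mpr ⟨N, fun n hn => ?_⟩
    have := hN n hn
    rw [Real.dist_eq, sub_zero] at this
    exact lt_of_abs_lt this
  obtain ⟨N, hN⟩ := eventually_atTop.mp hEev
  refine ⟨N, fun n hn => ?_⟩
  have hEn := hN n hn
  have hfn := hfpos n
  have hMn : M n ≤ g t * f n + ∑ k ∈ Finset.range (m + 1), A k n / (t * f n) ^ k :=
    hMbound t ht n
  have hE' : (∑ k ∈ Finset.range (m + 1), A k n / (t * f n) ^ k) < δ / 4 * f n := by
    rw [div_lt_iff₀ hfn] at hEn; linarith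
  have hen : e n ≤ δ / 2 * f n := by
    have h1 : M n - Cf * f n ≤ δ / 2 * f n := by nlinarith
    have h2 : (0:ℝ) ≤ δ / 2 * f n := by positivity
    exact max_le h1 h2
  have hen0 : 0 ≤ e n := le_max_right _ _
  rw [Real.dist_eq, sub_zero, abs_of_nonneg (div_nonneg hen0 hfn.le), div_lt_iff₀ hfn]
  nlinarith
end

section
/- Let r ≥ s ≥ 0 with r ≥ 1, let 1 ≤ λ_1 < ⋯ < λ_s ≤ r be integers, let K be a field of characteristic zero, and let a_1, …, a_{r+1}, b_1, …, b_s ∈ K satisfy b_j + q ≠ 0 in K for every integer q ≥ −1 and every 1 ≤ j ≤ s. For k ≥ −1 set a_i^{(k)} = a_i + ⌈(k+1−i)/(r+1)⌉ for 1 ≤ i ≤ r+1 and b_j^{(k)} = b_j + ⌈(k+1−λ_j)/r⌉ for 1 ≤ j ≤ s, and let g_k ∈ K[[t]] be the formal power series whose n-th coefficient is c_n^{(k)} = ∏_{i=1}^{r+1} (a_i^{(k)})_n / ( n! · ∏_{j=1}^{s} (b_j^{(k)})_n ) (the hypergeometric series r+1F_s(a_1^{(k)},…,a_{r+1}^{(k)};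 b_1^{(k)},…,b_s^{(k)}; t)). For k ∈ ℕ define α_{k+r} ∈ K by: α_{k+r} = ∏_{1≤i≤r+1, i≠[k]_{r+1}} a_i^{(k)} / ∏_{j=1}^{s} b_j^{(k)} if [k]_r ∉ {λ_1,…,λ_s}; and α_{k+r} = (b_ℓ^{(k)} − a_{[k]_{r+1}}^{(k)}) · ∏_{1≤i≤r+1, i≠[k]_{r+1}} a_i^{(k)} / ( (b_ℓ^{(k)} − 1) · ∏_{j=1}^{s} b_j^{(k)} ) if [k]_r = λ_ℓ for some 1 ≤ ℓ ≤ s. Then for every k ∈ ℕ, g_k(t) − g_{k−1}(t) = α_{k+r} · t · g_{k+r}(t) in K[[t]]; equivalently, c_0^{(k)} = c_0^{(k−1)} and c_n^{(k)} − c_n^{(k−1)} = α_{k+r} · c_{n−1}^{(k+r)} for all n ≥ 1. (By the Euler–Gauss recurrence method, this identity exhibits the ratios f_k = g_k/g_{k−1} as an r-branched Stieltjes continued fraction with coefficients (α_{k+r})_{k∈ℕ}.) -/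
open Finset Polynomial

/-- The shifted numerator parameters `a_i^{(k)} = a_i + ⌈(k+1−i)/(r+1)⌉`. -/
noncomputable def aShift {K : Type*} [Field K] (r : ℕ) (a : ℕ → K) (k : ℤ) (i : ℕ) : K :=
  a i + ((⌈((k + 1 - (i : ℤ) : ℤ) : ℚ) / ((r : ℚ) + 1)⌉ : ℤ) : K)

/-- The shifted denominator parameters `b_j^{(k)} = b_j + ⌈(k+1−λ_j)/r⌉`. -/
noncomputable def bShift {K : Type*} [Field K] (r : ℕ) (lam : ℕ → ℕ) (b : ℕ → K)
    (k : ℤ) (j : ℕ) : K :=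
  b j + ((⌈((k + 1 - (lam j : ℤ) : ℤ) : ℚ) / (r : ℚ)⌉ : ℤ) : K)

/-- The `n`-th coefficient `c_n^{(k)} = ∏_{i=1}^{r+1} (a_i^{(k)})_n /
(n!·∏_{j=1}^{s} (b_j^{(k)})_n)` of the hypergeometric series
`g_k = r+1F_s(a_1^{(k)},…,a_{r+1}^{(k)}; b_1^{(k)},…,b_s^{(k)}; t)`. -/
noncomputable def hgCoeff {K : Type*} [Field K] (r s : ℕ) (lam : ℕ → ℕ) (a b : ℕ → K)
    (k : ℤ) (n : ℕ) : K :=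
  (∏ i ∈ Finset.Icc 1 (r + 1), (ascPochhammer K n).eval (aShift r a k i)) /
    ((n.factorial : K) *
      ∏ j ∈ Finset.Icc 1 s, (ascPochhammer K n).eval (bShift r lam b k j))

/-- `[k]_n`, the unique element of `{1,…,n}` congruent to `k` modulo `n`. -/
def modIdx (k n : ℕ) : ℕ := ((((k : ℤ) - 1) % (n : ℤ)) + 1).toNat


section auxEG
open Finset Polynomial

variable {K : Type*} [Field K]

lemma poch_succ_left_eval (n : ℕ) (x : K) :
    (ascPochhammer K (n+1)).eval x = x * (ascPochhammer K n).eval (x+1) := by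
  rw [ascPochhammer_succ_left, eval_mul, eval_X, eval_comp, eval_add, eval_X, eval_one]

lemma poch_ne_zero (n : ℕ) (x : K) (hx : ∀ m : ℕ, x + (m:K) ≠ 0) :
    (ascPochhammer K n).eval x ≠ 0 := by
  induction n with
  | zero => simp
  | succ n ih => rw [ascPochhammer_succ_eval]; exact mul_ne_zero ih (hx n)

lemma ceil_helper (m : ℕ) (hm : 0 < m) (t u : ℤ) (hu1 : 0 < u) (hu2 : u ≤ m) :
    ⌈(((m : ℤ) * t + u : ℤ) : ℚ) / (m : ℚ)⌉ = t + 1 := by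
  have hm' : (0:ℚ) < (m:ℚ) := by exact_mod_cast hm
  have h1 : (((m : ℤ) * t + u : ℤ) : ℚ) / (m : ℚ) = (u:ℚ)/(m:ℚ) + (t:ℚ) := by
    push_cast; field_simp; ring
  rw [h1, Int.ceil_add_intCast]
  have h2 : ⌈(u:ℚ)/(m:ℚ)⌉ = 1 := by
    rw [Int.ceil_eq_iff]
    constructor
    · push_cast; rw [sub_self]
      exact div_pos (by exact_mod_cast hu1) hm'
    · push_cast
      rw [div_le_one hm']
      exact_mod_cast hu2
  omega

lemma ceil_succ_dvd (m : ℕ) (hm : 0 < m) (x : ℤ) (h : (m:ℤ) ∣ x) :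
    ⌈((x + 1 : ℤ) : ℚ) / (m : ℚ)⌉ = ⌈((x : ℤ) : ℚ) / (m : ℚ)⌉ + 1 := by
  obtain ⟨t, rfl⟩ := h
  have h2 : ((m:ℤ) * t : ℤ) = ((m:ℤ) * (t-1) + m : ℤ) := by ring
  rw [ceil_helper m hm t 1 one_pos (by exact_mod_cast hm), h2,
    ceil_helper m hm (t-1) m (by exact_mod_cast hm) le_rfl]
  ring

lemma ceil_succ_not_dvd (m : ℕ) (hm : 0 < m) (x : ℤ) (h : ¬ (m:ℤ) ∣ x) :
    ⌈((x + 1 : ℤ) : ℚ) / (m : ℚ)⌉ = ⌈((x : ℤ) : ℚ) / (m : ℚ)⌉ := by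
  have hm' : (0:ℤ) < m := by exact_mod_cast hm
  have h0 : x % m ≠ 0 := fun hh => h (Int.dvd_of_emod_eq_zero hh)
  have h1 : 0 ≤ x % m := Int.emod_nonneg x (by omega)
  have h2 : x % m < m := Int.emod_lt_of_pos x hm'
  have h3 : x = (m:ℤ) * (x / m) + (x % m) := (Int.mul_ediv_add_emod x m).symm
  have h4 : x + 1 = (m:ℤ) * (x / m) + (x % m + 1) := by omega
  rw [h4, ceil_helper m hm _ _ (by omega) (by omega)]
  nth_rewrite 2 [h3]
  rw [ceil_helper m hm _ _ (by omega) (by omega)]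

lemma ceil_add_self (m : ℕ) (hm : 0 < m) (x : ℤ) :
    ⌈((x + m : ℤ) : ℚ) / (m : ℚ)⌉ = ⌈((x : ℤ) : ℚ) / (m : ℚ)⌉ + 1 := by
  have hm' : (0:ℤ) < m := by exact_mod_cast hm
  have h1 : 0 ≤ (x-1) % m := Int.emod_nonneg (x-1) (by omega)
  have h2 : (x-1) % m < m := Int.emod_lt_of_pos (x-1) hm'
  have h3 : x - 1 = (m:ℤ) * ((x-1) / m) + ((x-1) % m) := (Int.mul_ediv_add_emod (x-1) m).symm
  have h4 : x = (m:ℤ) * ((x-1) / m) + ((x-1) % m + 1) := by omega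
  have h5 : x + m = (m:ℤ) * ((x-1) / m + 1) + ((x-1) % m + 1) := by
    rw [mul_add, mul_one]; omega
  have e1 : ⌈((x + m : ℤ) : ℚ) / (m : ℚ)⌉ = (x-1)/m + 1 + 1 := by
    rw [h5]; exact ceil_helper m hm _ _ (by omega) (by omega)
  have e2 : ⌈((x : ℤ) : ℚ) / (m : ℚ)⌉ = (x-1)/m + 1 := by
    nth_rewrite 1 [h4]; exact ceil_helper m hm _ _ (by omega) (by omega)
  rw [e1, e2]

lemma ceil_ge_neg_one (m : ℕ) (hm : 0 < m) (x : ℤ) (hx : -(m:ℤ) ≤ x) :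
    -1 ≤ ⌈((x : ℤ) : ℚ) / (m : ℚ)⌉ := by
  have hm' : (0:ℚ) < (m:ℚ) := by exact_mod_cast hm
  have h1 : (-1 : ℚ) ≤ ((x:ℤ):ℚ)/(m:ℚ) := by
    rw [neg_le, ← neg_div]
    rw [div_le_iff₀ hm']
    have hxq : (-(m:ℚ)) ≤ ((x:ℤ):ℚ) := by exact_mod_cast hx
    push_cast at hxq ⊢
    linarith
  have h2 := h1.trans (Int.le_ceil _)
  exact_mod_cast h2


def modIdx' (k n : ℕ) : ℕ := ((((k : ℤ) - 1) % (n : ℤ)) + 1).toNat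

lemma modIdx'_int (k n : ℕ) (hn : 0 < n) : (modIdx' k n : ℤ) = ((k:ℤ)-1) % n + 1 := by
  unfold modIdx'
  have h1 : 0 ≤ ((k:ℤ)-1) % n := Int.emod_nonneg _ (by exact_mod_cast hn.ne')
  rw [Int.toNat_of_nonneg (by omega)]

lemma modIdx'_mem (k n : ℕ) (hn : 0 < n) : modIdx' k n ∈ Finset.Icc 1 n := by
  have h1 : 0 ≤ ((k:ℤ)-1) % n := Int.emod_nonneg _ (by exact_mod_cast hn.ne')
  have h2 : ((k:ℤ)-1) % n < n := Int.emod_lt_of_pos _ (by exact_mod_cast hn)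
  have h3 := modIdx'_int k n hn
  rw [Finset.mem_Icc]
  omega

lemma modIdx'_dvd (k n : ℕ) (hn : 0 < n) : (n:ℤ) ∣ ((k:ℤ) - (modIdx' k n : ℤ)) := by
  have h3 := modIdx'_int k n hn
  refine ⟨((k:ℤ)-1) / n, ?_⟩
  have h4 := Int.mul_ediv_add_emod ((k:ℤ)-1) (n:ℤ)
  omega

lemma modIdx'_unique (k n i : ℕ) (hn : 0 < n) (hi : i ∈ Finset.Icc 1 n)
    (h : (n:ℤ) ∣ ((k:ℤ) - i)) : i = modIdx' k n := by
  obtain ⟨c1, hc1⟩ := h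
  obtain ⟨c2, hc2⟩ := modIdx'_dvd k n hn
  rw [Finset.mem_Icc] at hi
  have hm := modIdx'_mem k n hn
  rw [Finset.mem_Icc] at hm
  have hd : (i:ℤ) - (modIdx' k n : ℤ) = (n:ℤ) * (c2 - c1) := by
    rw [mul_sub]; omega
  have hb1 : (i:ℤ) ≤ n := by exact_mod_cast hi.2
  have hb2 : 1 ≤ (i:ℤ) := by exact_mod_cast hi.1
  have hb3 : (modIdx' k n : ℤ) ≤ n := by exact_mod_cast hm.2
  have hb4 : 1 ≤ (modIdx' k n : ℤ) := by exact_mod_cast hm.1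
  have hn' : (0:ℤ) < n := by exact_mod_cast hn
  have hc : c2 - c1 = 0 := by
    rcases lt_trichotomy (c2 - c1) 0 with h'|h'|h'
    · nlinarith
    · exact h'
    · nlinarith
  have : (i:ℤ) = (modIdx' k n : ℤ) := by rw [hc, mul_zero] at hd; omega
  exact_mod_cast this

variable (r : ℕ) (a : ℕ → K) (lam : ℕ → ℕ) (b : ℕ → K)

lemma aShift_sub_one_eq (k : ℤ) (i : ℕ) (h : ¬ ((r:ℤ)+1) ∣ (k - i)) :
    aShift r a k i = aShift r a (k-1) i := by
  unfold aShift
  have h1 : (k + 1 - (i:ℤ)) = (k - i) + 1 := by ring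
  have h2 : (k - 1 + 1 - (i:ℤ)) = k - i := by ring
  have h3 : ((r:ℚ)+1) = ((r+1:ℕ):ℚ) := by push_cast; ring
  have h4 : ¬ ((r+1:ℕ):ℤ) ∣ (k - i) := by push_cast; exact h
  rw [h1, h2, h3, ceil_succ_not_dvd (r+1) (by omega) _ h4]

lemma aShift_sub_one_dvd (k : ℤ) (i : ℕ) (h : ((r:ℤ)+1) ∣ (k - i)) :
    aShift r a k i = aShift r a (k-1) i + 1 := by
  unfold aShift
  have h1 : (k + 1 - (i:ℤ)) = (k - i) + 1 := by ring
  have h2 : (k - 1 + 1 - (i:ℤ)) = k - i := by ring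
  have h3 : ((r:ℚ)+1) = ((r+1:ℕ):ℚ) := by push_cast; ring
  have h4 : ((r+1:ℕ):ℤ) ∣ (k - i) := by push_cast; exact h
  rw [h1, h2, h3, ceil_succ_dvd (r+1) (by omega) _ h4]
  push_cast; ring

lemma aShift_add_r (k : ℤ) (i : ℕ) :
    aShift r a (k + r) i = aShift r a (k-1) i + 1 := by
  unfold aShift
  have h1 : (k + (r:ℤ) + 1 - (i:ℤ)) = (k - i) + ((r+1:ℕ):ℤ) := by push_cast; ring
  have h2 : (k - 1 + 1 - (i:ℤ)) = k - i := by ring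
  have h3 : ((r:ℚ)+1) = ((r+1:ℕ):ℚ) := by push_cast; ring
  rw [h1, h2, h3, ceil_add_self (r+1) (by omega)]
  push_cast; ring

lemma bShift_sub_one_eq (hr : 0 < r) (k : ℤ) (j : ℕ) (h : ¬ (r:ℤ) ∣ (k - lam j)) :
    bShift r lam b k j = bShift r lam b (k-1) j := by
  unfold bShift
  have h1 : (k + 1 - (lam j:ℤ)) = (k - lam j) + 1 := by ring
  have h2 : (k - 1 + 1 - (lam j:ℤ)) = k - lam j := by ring
  rw [h1, h2, ceil_succ_not_dvd r hr _ h]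

lemma bShift_sub_one_dvd (hr : 0 < r) (k : ℤ) (j : ℕ) (h : (r:ℤ) ∣ (k - lam j)) :
    bShift r lam b k j = bShift r lam b (k-1) j + 1 := by
  unfold bShift
  have h1 : (k + 1 - (lam j:ℤ)) = (k - lam j) + 1 := by ring
  have h2 : (k - 1 + 1 - (lam j:ℤ)) = k - lam j := by ring
  rw [h1, h2, ceil_succ_dvd r hr _ h]
  push_cast; ring

lemma bShift_add_r (hr : 0 < r) (k : ℤ) (j : ℕ) :
    bShift r lam b (k + r) j = bShift r lam b k j + 1 := by
  unfold bShift
  have h1 : (k + (r:ℤ) + 1 - (lam j:ℤ)) = (k + 1 - lam j) + (r:ℤ) := by ring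
  rw [h1, ceil_add_self r hr]
  push_cast; ring

lemma bShift_add_ne (hr : 0 < r) (j : ℕ) (hlamr : lam j ≤ r)
    (hbj : ∀ q : ℤ, -1 ≤ q → b j + (q:K) ≠ 0) (k : ℤ) (hk : -1 ≤ k) (m : ℕ) :
    bShift r lam b k j + (m:K) ≠ 0 := by
  unfold bShift
  have he : -1 ≤ ⌈((k + 1 - (lam j : ℤ) : ℤ) : ℚ) / (r : ℚ)⌉ := by
    apply ceil_ge_neg_one r hr
    omega
  have hcast : b (j:ℕ) + ((⌈((k + 1 - (lam j : ℤ) : ℤ) : ℚ) / (r : ℚ)⌉ : ℤ) : K) + (m:K)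
      = b j + (((⌈((k + 1 - (lam j : ℤ) : ℤ) : ℚ) / (r : ℚ)⌉ + m : ℤ)) : K) := by
    push_cast; ring
  rw [hcast]
  exact hbj _ (by omega)

end auxEG

/-- The Euler–Gauss recurrence `g_k − g_{k−1} = α_{k+r}·t·g_{k+r}` for the contiguous
hypergeometric series `g_k` (case `r ≥ s`), exhibiting the ratios `f_k = g_k/g_{k−1}` as an
`r`-branched Stieltjes continued fraction with coefficients `(α_{k+r})_{k∈ℕ}`. -/
theorem stmt8 {K : Type*} [Field K] [CharZero K]
    (r s : ℕ) (hr : 1 ≤ r) (hs : s ≤ r)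
    (lam : ℕ → ℕ)
    (hlam1 : ∀ j, 1 ≤ j → j ≤ s → 1 ≤ lam j ∧ lam j ≤ r)
    (hlam2 : ∀ j j', 1 ≤ j → j < j' → j' ≤ s → lam j < lam j')
    (a b : ℕ → K)
    (hb : ∀ j, 1 ≤ j → j ≤ s → ∀ q : ℤ, -1 ≤ q → b j + (q : K) ≠ 0)
    (α : ℕ → K)
    (hα1 : ∀ k : ℕ, (∀ ℓ, 1 ≤ ℓ → ℓ ≤ s → modIdx k r ≠ lam ℓ) →
      α (k + r) =
        (∏ i ∈ (Finset.Icc 1 (r + 1)).erase (modIdx k (r + 1)), aShift r a (k : ℤ) i) /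
          ∏ j ∈ Finset.Icc 1 s, bShift r lam b (k : ℤ) j)
    (hα2 : ∀ k ℓ, 1 ≤ ℓ → ℓ ≤ s → modIdx k r = lam ℓ →
      α (k + r) =
        ((bShift r lam b (k : ℤ) ℓ - aShift r a (k : ℤ) (modIdx k (r + 1))) *
            ∏ i ∈ (Finset.Icc 1 (r + 1)).erase (modIdx k (r + 1)), aShift r a (k : ℤ) i) /
          ((bShift r lam b (k : ℤ) ℓ - 1) *
            ∏ j ∈ Finset.Icc 1 s, bShift r lam b (k : ℤ) j)) :
    ∀ k : ℕ,
      PowerSeries.mk (hgCoeff r s lam a b (k : ℤ))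
          - PowerSeries.mk (hgCoeff r s lam a b ((k : ℤ) - 1))
        = PowerSeries.C (R := K) (α (k + r)) * PowerSeries.X *
            PowerSeries.mk (hgCoeff r s lam a b ((k : ℤ) + r)) := by
  intro k
  have hr1 : 0 < r := hr
  have hrp : (0:ℕ) < r + 1 := by omega
  have hmod_eq : modIdx = modIdx' := rfl
  -- index where the a-parameters jump
  set i0 := modIdx k (r+1) with hi0def
  have hi0 : i0 ∈ Finset.Icc 1 (r+1) := by
    rw [hi0def, hmod_eq]
    exact modIdx'_mem k (r+1) hrp
  have haA : aShift r a (k:ℤ) i0 = aShift r a ((k:ℤ)-1) i0 + 1 := by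
    apply aShift_sub_one_dvd
    have := modIdx'_dvd k (r+1) hrp
    rw [hi0def, hmod_eq]
    exact_mod_cast this
  have haEq : ∀ i ∈ (Finset.Icc 1 (r+1)).erase i0,
      aShift r a (k:ℤ) i = aShift r a ((k:ℤ)-1) i := by
    intro i hi
    obtain ⟨hne, hmem⟩ := Finset.mem_erase.mp hi
    apply aShift_sub_one_eq
    intro hdvd
    apply hne
    rw [hi0def, hmod_eq]
    exact modIdx'_unique k (r+1) i hrp hmem (by exact_mod_cast hdvd)
  have haR : ∀ i : ℕ, aShift r a ((k:ℤ)+r) i = aShift r a ((k:ℤ)-1) i + 1 :=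
    fun i => aShift_add_r r a (k:ℤ) i
  -- nonvanishing of b-parameters
  have hBne : ∀ j ∈ Finset.Icc 1 s, ∀ k' : ℤ, -1 ≤ k' → ∀ m : ℕ,
      bShift r lam b k' j + (m:K) ≠ 0 := by
    intro j hj k' hk' m
    rw [Finset.mem_Icc] at hj
    exact bShift_add_ne r lam b hr1 j (hlam1 j hj.1 hj.2).2
      (fun q hq => hb j hj.1 hj.2 q hq) k' hk' m
  have hPB : ∀ j ∈ Finset.Icc 1 s, ∀ k' : ℤ, -1 ≤ k' → ∀ m : ℕ,
      (ascPochhammer K m).eval (bShift r lam b k' j) ≠ 0 := by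
    intro j hj k' hk' m
    exact poch_ne_zero m _ (hBne j hj k' hk')
  have hk0 : (-1:ℤ) ≤ (k:ℤ) - 1 := by omega
  have hk1 : (-1:ℤ) ≤ (k:ℤ) := by omega
  have hk2 : (-1:ℤ) ≤ (k:ℤ) + r := by omega
  have hfac : ∀ m : ℕ, ((m.factorial : K)) ≠ 0 :=
    fun m => Nat.cast_ne_zero.mpr (Nat.factorial_pos m).ne'
  -- reduce to coefficients
  ext n
  rw [map_sub, PowerSeries.coeff_mk, PowerSeries.coeff_mk,
    show PowerSeries.C (R := K) (α (k+r)) * PowerSeries.X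
        * PowerSeries.mk (hgCoeff r s lam a b ((k:ℤ)+r))
      = PowerSeries.X * (PowerSeries.C (R := K) (α (k+r))
        * PowerSeries.mk (hgCoeff r s lam a b ((k:ℤ)+r))) from by ring]
  cases n with
  | zero =>
    have h0 : ∀ k' : ℤ, hgCoeff r s lam a b k' 0 = 1 := by
      intro k'; simp [hgCoeff]
    rw [h0, h0, sub_self, PowerSeries.coeff_zero_eq_constantCoeff, map_mul,
      PowerSeries.constantCoeff_X, zero_mul]
  | succ n =>
    rw [PowerSeries.coeff_succ_X_mul, PowerSeries.coeff_C_mul, PowerSeries.coeff_mk]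
    simp only [hgCoeff]
    -- a-side product identities
    set A := aShift r a ((k:ℤ)-1) i0 with hAdef
    set Na := ∏ i ∈ (Finset.Icc 1 (r+1)).erase i0,
      (ascPochhammer K (n+1)).eval (aShift r a ((k:ℤ)-1) i) with hNadef
    set x := (ascPochhammer K n).eval (A + 1) with hxdef
    have hN1 : (∏ i ∈ Finset.Icc 1 (r+1),
        (ascPochhammer K (n+1)).eval (aShift r a (k:ℤ) i)) = x * (A + 1 + n) * Na := by
      rw [← Finset.mul_prod_erase _ _ hi0]
      congr 1
      · rw [haA, ascPochhammer_succ_eval]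
      · exact Finset.prod_congr rfl (fun i hi => by rw [haEq i hi])
    have hN2 : (∏ i ∈ Finset.Icc 1 (r+1),
        (ascPochhammer K (n+1)).eval (aShift r a ((k:ℤ)-1) i)) = A * x * Na := by
      rw [← Finset.mul_prod_erase _ _ hi0, poch_succ_left_eval]
    have hN3 : (∏ i ∈ (Finset.Icc 1 (r+1)).erase i0, aShift r a (k:ℤ) i) *
        (∏ i ∈ Finset.Icc 1 (r+1), (ascPochhammer K n).eval (aShift r a ((k:ℤ)+r) i))
        = x * Na := by
      rw [← Finset.mul_prod_erase _ _ hi0, haR i0]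
      have hEM : (∏ i ∈ (Finset.Icc 1 (r+1)).erase i0, aShift r a (k:ℤ) i) *
          (∏ i ∈ (Finset.Icc 1 (r+1)).erase i0,
            (ascPochhammer K n).eval (aShift r a ((k:ℤ)+r) i)) = Na := by
        rw [← Finset.prod_mul_distrib]
        exact Finset.prod_congr rfl (fun i hi => by
          rw [haEq i hi, haR i, ← poch_succ_left_eval])
      calc (∏ i ∈ (Finset.Icc 1 (r+1)).erase i0, aShift r a (k:ℤ) i) *
            ((ascPochhammer K n).eval (A + 1) *
              ∏ i ∈ (Finset.Icc 1 (r+1)).erase i0,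
                (ascPochhammer K n).eval (aShift r a ((k:ℤ)+r) i))
          = (ascPochhammer K n).eval (A + 1) *
            ((∏ i ∈ (Finset.Icc 1 (r+1)).erase i0, aShift r a (k:ℤ) i) *
              ∏ i ∈ (Finset.Icc 1 (r+1)).erase i0,
                (ascPochhammer K n).eval (aShift r a ((k:ℤ)+r) i)) := by ring
        _ = x * Na := by rw [hEM]
    have hfs : ((n+1).factorial : K) = (n+1) * (n.factorial : K) := by
      rw [Nat.factorial_succ]; push_cast; ring
    have hn1 : ((n:K)+1) ≠ 0 := by
      have : ((n+1:ℕ):K) ≠ 0 := Nat.cast_ne_zero.mpr (by omega)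
      push_cast at this; exact this
    by_cases hcase : ∃ ℓ, 1 ≤ ℓ ∧ ℓ ≤ s ∧ modIdx k r = lam ℓ
    · obtain ⟨ℓ, hℓ1, hℓ2, hml⟩ := hcase
      have hℓmem : ℓ ∈ Finset.Icc 1 s := Finset.mem_Icc.mpr ⟨hℓ1, hℓ2⟩
      rw [hα2 k ℓ hℓ1 hℓ2 hml]
      set B := bShift r lam b ((k:ℤ)-1) ℓ with hBdef
      have hbB : bShift r lam b (k:ℤ) ℓ = B + 1 := by
        apply bShift_sub_one_dvd r lam b hr1
        have := modIdx'_dvd k r hr1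
        rw [← hmod_eq, hml] at this
        exact_mod_cast this
      have hbEq : ∀ j ∈ (Finset.Icc 1 s).erase ℓ,
          bShift r lam b (k:ℤ) j = bShift r lam b ((k:ℤ)-1) j := by
        intro j hj
        obtain ⟨hne, hmem⟩ := Finset.mem_erase.mp hj
        rw [Finset.mem_Icc] at hmem
        apply bShift_sub_one_eq r lam b hr1
        intro hdvd
        have hmem' : lam j ∈ Finset.Icc 1 r := Finset.mem_Icc.mpr (hlam1 j hmem.1 hmem.2)
        have heq : lam j = modIdx k r := by
          rw [hmod_eq]
          exact modIdx'_unique k r (lam j) hr1 hmem' (by exact_mod_cast hdvd)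
        rw [hml] at heq
        have : j ≠ ℓ := hne
        rcases lt_or_gt_of_ne this with h'|h'
        · exact absurd heq (hlam2 j ℓ hmem.1 h' hℓ2).ne
        · exact absurd heq.symm (hlam2 ℓ j hℓ1 h' hmem.2).ne
      set z := (ascPochhammer K n).eval (B + 1) with hzdef
      set Nb := ∏ j ∈ (Finset.Icc 1 s).erase ℓ,
        (ascPochhammer K (n+1)).eval (bShift r lam b ((k:ℤ)-1) j) with hNbdef
      have hDk : (∏ j ∈ Finset.Icc 1 s,
          (ascPochhammer K (n+1)).eval (bShift r lam b (k:ℤ) j)) = z * (B + 1 + n) * Nb := by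
        rw [← Finset.mul_prod_erase _ _ hℓmem]
        congr 1
        · rw [hbB, ascPochhammer_succ_eval]
        · exact Finset.prod_congr rfl (fun j hj => by rw [hbEq j hj])
      have hDk1 : (∏ j ∈ Finset.Icc 1 s,
          (ascPochhammer K (n+1)).eval (bShift r lam b ((k:ℤ)-1) j)) = B * z * Nb := by
        rw [← Finset.mul_prod_erase _ _ hℓmem, poch_succ_left_eval]
      have hbR : ∀ j : ℕ, bShift r lam b ((k:ℤ)+r) j = bShift r lam b (k:ℤ) j + 1 :=
        fun j => bShift_add_r r lam b hr1 (k:ℤ) j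
      set Ea := ∏ i ∈ (Finset.Icc 1 (r+1)).erase i0, aShift r a (k:ℤ) i with hEadef
      set PA3 := ∏ i ∈ Finset.Icc 1 (r+1),
        (ascPochhammer K n).eval (aShift r a ((k:ℤ)+r) i) with hPA3def
      set Eb := ∏ j ∈ (Finset.Icc 1 s).erase ℓ, bShift r lam b ((k:ℤ)-1) j with hEbdef
      set Mb := ∏ j ∈ (Finset.Icc 1 s).erase ℓ,
        (ascPochhammer K n).eval (bShift r lam b ((k:ℤ)-1) j + 1) with hMbdef
      set yv := (ascPochhammer K n).eval (B + 1 + 1) with hyvdef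
      have hEbfull : (∏ j ∈ Finset.Icc 1 s, bShift r lam b (k:ℤ) j) = (B + 1) * Eb := by
        rw [← Finset.mul_prod_erase _ _ hℓmem, hbB, hEbdef]
        congr 1
        exact Finset.prod_congr rfl (fun j hj => by rw [hbEq j hj])
      have hB3 : (∏ j ∈ Finset.Icc 1 s,
          (ascPochhammer K n).eval (bShift r lam b ((k:ℤ)+r) j)) = yv * Mb := by
        rw [← Finset.mul_prod_erase _ _ hℓmem, hbR ℓ, hbB, hyvdef, hMbdef]
        congr 1
        exact Finset.prod_congr rfl (fun j hj => by rw [hbR j, hbEq j hj])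
      have hEM : Eb * Mb = Nb := by
        rw [hEbdef, hMbdef, hNbdef, ← Finset.prod_mul_distrib]
        exact Finset.prod_congr rfl (fun j hj => by rw [← poch_succ_left_eval])
      have hzy : (B + 1) * yv = z * (B + 1 + n) := by
        rw [hyvdef, hzdef, ← poch_succ_left_eval, ascPochhammer_succ_eval]
      rw [hN1, hN2, hDk, hDk1, hbB, haA, hEbfull, hB3, div_mul_div_comm,
        show ((B + 1 - (A + 1)) * Ea) * PA3 = (B + 1 - (A + 1)) * (Ea * PA3) from
          mul_assoc _ _ _,
        hN3,
        show ((B + 1 - 1) * ((B + 1) * Eb)) * ((n.factorial : K) * (yv * Mb))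
            = (B + 1 - 1) * (n.factorial : K) * (((B + 1) * yv) * (Eb * Mb)) from by ring,
        hzy, hEM, hfs]
      have hB0 : B ≠ 0 := by simpa using hBne ℓ hℓmem ((k:ℤ)-1) hk0 0
      have hB1 : B + 1 ≠ 0 := by simpa using hBne ℓ hℓmem ((k:ℤ)-1) hk0 1
      have hBn1 : B + 1 + (n:K) ≠ 0 := by
        have h := hBne ℓ hℓmem ((k:ℤ)-1) hk0 (n+1)
        push_cast at h
        exact fun hc => h (by linear_combination hc)
      have hzne : z ≠ 0 := by
        rw [hzdef]
        apply poch_ne_zero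
        intro m
        have h := hBne ℓ hℓmem ((k:ℤ)-1) hk0 (m+1)
        push_cast at h
        exact fun hc => h (by linear_combination hc)
      have hNbne : Nb ≠ 0 := by
        rw [hNbdef]
        exact Finset.prod_ne_zero_iff.mpr
          (fun j hj => hPB j (Finset.mem_of_mem_erase hj) ((k:ℤ)-1) hk0 (n+1))
      have hB11 : B + 1 - 1 ≠ 0 := by simpa using hB0
      have hd1 : ((n:K)+1) * (n.factorial:K) * (z * (B + 1 + (n:K)) * Nb) ≠ 0 :=
        mul_ne_zero (mul_ne_zero hn1 (hfac n))
          (mul_ne_zero (mul_ne_zero hzne hBn1) hNbne)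
      have hd2 : ((n:K)+1) * (n.factorial:K) * (B * z * Nb) ≠ 0 :=
        mul_ne_zero (mul_ne_zero hn1 (hfac n))
          (mul_ne_zero (mul_ne_zero hB0 hzne) hNbne)
      have hd3 : (B + 1 - 1) * (n.factorial:K) * (z * (B + 1 + (n:K)) * Nb) ≠ 0 :=
        mul_ne_zero (mul_ne_zero hB11 (hfac n))
          (mul_ne_zero (mul_ne_zero hzne hBn1) hNbne)
      rw [div_sub_div _ _ hd1 hd2, div_eq_div_iff (mul_ne_zero hd1 hd2) hd3]
      ring
    · push_neg at hcase
      have hnol : ∀ ℓ, 1 ≤ ℓ → ℓ ≤ s → modIdx k r ≠ lam ℓ := fun ℓ h1 h2 => hcase ℓ h1 h2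
      rw [hα1 k hnol]
      have hbEq : ∀ j ∈ Finset.Icc 1 s,
          bShift r lam b (k:ℤ) j = bShift r lam b ((k:ℤ)-1) j := by
        intro j hj
        rw [Finset.mem_Icc] at hj
        apply bShift_sub_one_eq r lam b hr1
        intro hdvd
        have hmem' : lam j ∈ Finset.Icc 1 r := Finset.mem_Icc.mpr (hlam1 j hj.1 hj.2)
        have heq : lam j = modIdx k r := by
          rw [hmod_eq]
          exact modIdx'_unique k r (lam j) hr1 hmem' (by exact_mod_cast hdvd)
        exact hnol j hj.1 hj.2 heq.symm
      have hbR : ∀ j : ℕ, bShift r lam b ((k:ℤ)+r) j = bShift r lam b (k:ℤ) j + 1 :=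
        fun j => bShift_add_r r lam b hr1 (k:ℤ) j
      have hDk1 : (∏ j ∈ Finset.Icc 1 s,
          (ascPochhammer K (n+1)).eval (bShift r lam b ((k:ℤ)-1) j))
          = ∏ j ∈ Finset.Icc 1 s,
            (ascPochhammer K (n+1)).eval (bShift r lam b (k:ℤ) j) :=
        (Finset.prod_congr rfl (fun j hj => by rw [hbEq j hj])).symm
      have hD3 : (∏ j ∈ Finset.Icc 1 s, bShift r lam b (k:ℤ) j) *
          (∏ j ∈ Finset.Icc 1 s, (ascPochhammer K n).eval (bShift r lam b ((k:ℤ)+r) j))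
          = ∏ j ∈ Finset.Icc 1 s,
            (ascPochhammer K (n+1)).eval (bShift r lam b (k:ℤ) j) := by
        rw [← Finset.prod_mul_distrib]
        exact Finset.prod_congr rfl (fun j hj => by rw [hbR j, ← poch_succ_left_eval])
      rw [hN1, hN2, hDk1, div_mul_div_comm, hN3,
        show (∏ j ∈ Finset.Icc 1 s, bShift r lam b (k:ℤ) j) *
            ((n.factorial : K) * (∏ j ∈ Finset.Icc 1 s,
              (ascPochhammer K n).eval (bShift r lam b ((k:ℤ)+r) j)))
          = (n.factorial : K) * ((∏ j ∈ Finset.Icc 1 s, bShift r lam b (k:ℤ) j) *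
            (∏ j ∈ Finset.Icc 1 s,
              (ascPochhammer K n).eval (bShift r lam b ((k:ℤ)+r) j))) from by ring,
        hD3, hfs]
      have hDkne : (∏ j ∈ Finset.Icc 1 s,
          (ascPochhammer K (n+1)).eval (bShift r lam b (k:ℤ) j)) ≠ 0 :=
        Finset.prod_ne_zero_iff.mpr (fun j hj => hPB j hj (k:ℤ) hk1 (n+1))
      have hd1 : ((n:K)+1) * (n.factorial:K) * (∏ j ∈ Finset.Icc 1 s,
          (ascPochhammer K (n+1)).eval (bShift r lam b (k:ℤ) j)) ≠ 0 :=
        mul_ne_zero (mul_ne_zero hn1 (hfac n)) hDkne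
      have hd3 : (n.factorial:K) * (∏ j ∈ Finset.Icc 1 s,
          (ascPochhammer K (n+1)).eval (bShift r lam b (k:ℤ) j)) ≠ 0 :=
        mul_ne_zero (hfac n) hDkne
      rw [div_sub_div_same, div_eq_div_iff hd1 hd3]
      ring
end

section
/- Let K be a field of characteristic zero, p ∈ ℕ, n ∈ ℕ, and m_1, …, m_p ∈ ℕ with m := m_1 + ⋯ + m_p ≤ n. Let c_1, …, c_p, d ∈ K be such that c_i + q ≠ 0 for all integers 0 ≤ q ≤ n−1 and all i, and d + q ≠ 0 for all integers 1 ≤ q ≤ n. Then: (i) Σ_{j=0}^{n} (−n)_j · ∏_{i=1}^{p} (c_i + m_i)_j / ( j! · ∏_{i=1}^{p} (c_i)_j ) equals 0 if m ≤ n−1, and equals (−1)^n · n! / ∏_{i=1}^{p} (c_i)_{m_i} if m = n; and (ii) (Minton's formula) Σ_{j=0}^{n} (−n)_j · (d)_j · ∏_{i=1}^{p} (c_i + m_i)_j / ( j! · (d+1)_j · ∏_{i=1}^{p} (c_i)_j ) = n! · ∏_{i=1}^{p} (c_i − d)_{m_i} / ( (d+1)_n · ∏_{i=1}^{p} (c_i)_{m_i}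 ). -/
open Finset Polynomial

lemma pascal_sum {K : Type*} [Field K] (n : ℕ) (g : ℕ → K) :
    ∑ j ∈ range (n + 2), (-1 : K) ^ j * ((n+1).choose j : K) * g j
      = ∑ j ∈ range (n + 1), (-1 : K) ^ j * (n.choose j : K) * (g j - g (j+1)) := by
  have e1 : ∑ j ∈ range (n + 2), (-1 : K) ^ j * ((n+1).choose j : K) * g j
      = (∑ j ∈ range (n+1), (-1:K)^(j+1) * ((n+1).choose (j+1) : K) * g (j+1)) + g 0 := by
    rw [Finset.sum_range_succ']
    simp
  have e2 : ∀ j, (-1:K)^(j+1) * ((n+1).choose (j+1) : K) * g (j+1)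
      = -((-1:K)^j * (n.choose j : K) * g (j+1))
        + (-1:K)^(j+1) * (n.choose (j+1) : K) * g (j+1) := by
    intro j; rw [Nat.choose_succ_succ]; push_cast; ring
  have e3 : (∑ j ∈ range (n+1), (-1:K)^(j+1) * (n.choose (j+1) : K) * g (j+1)) + g 0
      = ∑ j ∈ range (n+1), (-1:K)^j * (n.choose j : K) * g j := by
    rw [Finset.sum_range_succ (fun j => (-1:K)^(j+1) * (n.choose (j+1) : K) * g (j+1)) n,
      Finset.sum_range_succ' (fun j => (-1:K)^j * (n.choose j : K) * g j) n]
    simp [Nat.choose_succ_self]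
  calc ∑ j ∈ range (n + 2), (-1 : K) ^ j * ((n+1).choose j : K) * g j
      = (∑ j ∈ range (n+1), (-((-1:K)^j * (n.choose j : K) * g (j+1))
          + (-1:K)^(j+1) * (n.choose (j+1) : K) * g (j+1))) + g 0 := by
        rw [e1]; congr 1; exact Finset.sum_congr rfl fun j _ => e2 j
    _ = (∑ j ∈ range (n+1), -((-1:K)^j * (n.choose j : K) * g (j+1)))
        + ((∑ j ∈ range (n+1), (-1:K)^(j+1) * (n.choose (j+1) : K) * g (j+1)) + g 0) := by
        rw [Finset.sum_add_distrib]; ring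
    _ = ∑ j ∈ range (n + 1), (-1 : K) ^ j * (n.choose j : K) * (g j - g (j+1)) := by
        rw [e3, ← Finset.sum_add_distrib]
        exact Finset.sum_congr rfl fun j _ => by ring

lemma taylor_one_coeff {K : Type*} [Field K] [CharZero K] (P : K[X]) (N : ℕ)
    (h : P.natDegree ≤ N + 1) :
    (taylor (1:K) P).coeff N = P.coeff N + ((N:K) + 1) * P.coeff (N+1) := by
  rw [taylor_coeff]
  have hdeg : (hasseDeriv N P).natDegree < 2 := by
    have : (hasseDeriv N P).natDegree ≤ 1 := by
      rw [natDegree_le_iff_coeff_eq_zero]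
      intro M hM
      rw [hasseDeriv_coeff]
      have : P.coeff (M + N) = 0 := by
        apply coeff_eq_zero_of_natDegree_lt
        omega
      simp [this]
    omega
  rw [eval_eq_sum_range' hdeg]
  rw [Finset.sum_range_succ, Finset.sum_range_one]
  simp [hasseDeriv_coeff, Nat.choose_succ_self_right, add_comm 1 N]

lemma keyP {K : Type*} [Field K] [CharZero K] :
    ∀ n : ℕ, ∀ P : K[X], P.natDegree ≤ n →
      ∑ j ∈ range (n + 1), (-1:K)^j * (n.choose j : K) * P.eval (j : K)
        = (-1:K)^n * (n.factorial : K) * P.coeff n := by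
  intro n
  induction n with
  | zero =>
    intro P hP
    have : P.eval (0:K) = P.coeff 0 := (coeff_zero_eq_eval_zero P).symm
    simp [this]
  | succ n ih =>
    intro P hP
    set Q : K[X] := P - taylor 1 P with hQ
    have hQcoeff : ∀ N, n ≤ N → Q.coeff N = -(((N:K) + 1) * P.coeff (N+1)) := by
      intro N hN
      have hPN : P.natDegree ≤ N + 1 := le_trans hP (by omega)
      rw [hQ, coeff_sub, taylor_one_coeff P N hPN]
      ring
    have hQdeg : Q.natDegree ≤ n := by
      rw [natDegree_le_iff_coeff_eq_zero]
      intro N hN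
      rw [hQcoeff N (le_of_lt hN)]
      have : P.coeff (N+1) = 0 := coeff_eq_zero_of_natDegree_lt (by omega)
      simp [this]
    have hQeval : ∀ j : ℕ, Q.eval (j : K) = P.eval (j:K) - P.eval ((j:K)+1) := by
      intro j
      rw [hQ, eval_sub, taylor_eval]
    have := pascal_sum n (fun j => P.eval (j : K))
    rw [this]
    have e : ∑ j ∈ range (n + 1), (-1 : K) ^ j * (n.choose j : K) *
        (P.eval (j:K) - P.eval ((j+1 : ℕ) : K))
        = ∑ j ∈ range (n + 1), (-1:K)^j * (n.choose j : K) * Q.eval (j : K) := by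
      apply Finset.sum_congr rfl
      intro j _
      rw [hQeval j]
      push_cast
      ring
    rw [e, ih Q hQdeg, hQcoeff n le_rfl]
    rw [Nat.factorial_succ]
    push_cast
    ring

lemma keyD {K : Type*} [Field K] :
    ∀ n : ℕ, ∀ d : K, (∀ q : ℕ, q ≤ n → d + (q:K) ≠ 0) →
      ∑ j ∈ range (n + 1), (-1:K)^j * (n.choose j : K) * (d + (j:K))⁻¹
        = (n.factorial : K) / ∏ q ∈ range (n+1), (d + (q:K)) := by
  intro n
  induction n with
  | zero =>
    intro d hd
    simp [div_eq_mul_inv]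
  | succ n ih =>
    intro d hd
    rw [pascal_sum n (fun j => (d + (j:K))⁻¹)]
    have split : ∑ j ∈ range (n+1), (-1:K)^j * (n.choose j : K) *
        ((d + (j:K))⁻¹ - (d + ((j+1 : ℕ):K))⁻¹)
        = (∑ j ∈ range (n+1), (-1:K)^j * (n.choose j : K) * (d + (j:K))⁻¹)
          - ∑ j ∈ range (n+1), (-1:K)^j * (n.choose j : K) * ((d+1) + (j:K))⁻¹ := by
      rw [← Finset.sum_sub_distrib]
      apply Finset.sum_congr rfl
      intro j _
      push_cast
      ring_nf
    rw [split, ih d (fun q hq => hd q (by omega)),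
      ih (d+1) (fun q hq => by
        have := hd (q+1) (by omega)
        push_cast at this
        rw [show (d+1) + (q:K) = d + ((q:K)+1) by ring]
        exact this)]
    set A := ∏ q ∈ range (n+1), (d + (q:K)) with hA
    set B := ∏ q ∈ range (n+1), ((d+1) + (q:K)) with hB
    have hAne : A ≠ 0 := Finset.prod_ne_zero_iff.mpr fun q hq =>
      hd q (by simp at hq; omega)
    have hBne : B ≠ 0 := Finset.prod_ne_zero_iff.mpr fun q hq => by
      have := hd (q+1) (by simp at hq; omega)
      push_cast at this
      rw [show (d+1) + (q:K) = d + ((q:K)+1) by ring]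
      exact this
    have hd0 : d ≠ 0 := by simpa using hd 0 (by omega)
    have hlast : d + ((n:K)+1) ≠ 0 := by
      have := hd (n+1) (by omega)
      push_cast at this
      exact this
    have hC1 : ∏ q ∈ range (n+2), (d + (q:K)) = A * (d + ((n:K)+1)) := by
      rw [Finset.prod_range_succ, ← hA]
      push_cast
      ring
    have hC2 : ∏ q ∈ range (n+2), (d + (q:K)) = d * B := by
      rw [Finset.prod_range_succ']
      have e : ∏ q ∈ range (n+1), (d + ((q+1:ℕ):K)) = B := by
        rw [hB]
        apply Finset.prod_congr rfl
        intro q _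
        push_cast
        ring
      rw [e]
      push_cast
      ring
    have key : A * (d + ((n:K)+1)) = d * B := by rw [← hC1, hC2]
    rw [hC1]
    rw [div_sub_div _ _ hAne hBne, div_eq_div_iff (mul_ne_zero hAne hBne)
      (mul_ne_zero hAne hlast)]
    push_cast [Nat.factorial_succ]
    linear_combination (-(↑n.factorial * A) : K) * key

lemma asc_eval_prod {K : Type*} [Field K] (j : ℕ) (x : K) :
    (ascPochhammer K j).eval x = ∏ t ∈ range j, (x + t) := by
  induction j with
  | zero => simp
  | succ j ih => rw [ascPochhammer_succ_eval, ih, Finset.prod_range_succ]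

lemma asc_eval_neg_nat {K : Type*} [Field K] [CharZero K] (n j : ℕ) :
    (ascPochhammer K j).eval (-(n : K)) = (-1:K)^j * (j.factorial : K) * (n.choose j : K) := by
  rw [ascPochhammer_eval_neg_eq_descPochhammer, descPochhammer_eval_eq_descFactorial,
    Nat.descFactorial_eq_factorial_mul_choose]
  push_cast
  ring

lemma asc_shift {K : Type*} [Field K] (a b : ℕ) (x : K) :
    (ascPochhammer K a).eval x * (ascPochhammer K b).eval (x + a)
      = (ascPochhammer K (a + b)).eval x := by
  have h := congrArg (Polynomial.eval x) (ascPochhammer_mul (S := K) a b)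
  simpa [eval_comp] using h

/-- Evaluations of terminating hypergeometric series at 1:
(i) `p+1F_p(−n, c_1+m_1,…,c_p+m_p; c_1,…,c_p; 1)` equals `0` if `m_1+⋯+m_p < n` and
`(−1)^n·n!/∏(c_i)_{m_i}` if `m_1+⋯+m_p = n`;
(ii) Minton's formula for `p+2F_{p+1}(−n, d, c_1+m_1,…,c_p+m_p; d+1, c_1,…,c_p; 1)`. -/
theorem stmt11 {K : Type*} [Field K] [CharZero K]
    (p n : ℕ) (ms : ℕ → ℕ) (hm : (∑ i ∈ Finset.Icc 1 p, ms i) ≤ n)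
    (c : ℕ → K) (d : K)
    (hc : ∀ i, 1 ≤ i → i ≤ p → ∀ q : ℕ, q ≤ n - 1 → c i + (q : K) ≠ 0)
    (hd : ∀ q : ℕ, 1 ≤ q → q ≤ n → d + (q : K) ≠ 0) :
    ((∑ i ∈ Finset.Icc 1 p, ms i) < n →
      ∑ j ∈ Finset.range (n + 1),
        ((ascPochhammer K j).eval (-(n : K)) *
            ∏ i ∈ Finset.Icc 1 p, (ascPochhammer K j).eval (c i + (ms i : K))) /
          ((j.factorial : K) * ∏ i ∈ Finset.Icc 1 p, (ascPochhammer K j).eval (c i))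
        = 0) ∧
    ((∑ i ∈ Finset.Icc 1 p, ms i) = n →
      ∑ j ∈ Finset.range (n + 1),
        ((ascPochhammer K j).eval (-(n : K)) *
            ∏ i ∈ Finset.Icc 1 p, (ascPochhammer K j).eval (c i + (ms i : K))) /
          ((j.factorial : K) * ∏ i ∈ Finset.Icc 1 p, (ascPochhammer K j).eval (c i))
        = (-1) ^ n * (n.factorial : K) /
            ∏ i ∈ Finset.Icc 1 p, (ascPochhammer K (ms i)).eval (c i)) ∧
    (∑ j ∈ Finset.range (n + 1),
        ((ascPochhammer K j).eval (-(n : K)) * (ascPochhammer K j).eval d *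
            ∏ i ∈ Finset.Icc 1 p, (ascPochhammer K j).eval (c i + (ms i : K))) /
          ((j.factorial : K) * (ascPochhammer K j).eval (d + 1) *
            ∏ i ∈ Finset.Icc 1 p, (ascPochhammer K j).eval (c i))
      = (n.factorial : K) *
          (∏ i ∈ Finset.Icc 1 p, (ascPochhammer K (ms i)).eval (c i - d)) /
          ((ascPochhammer K n).eval (d + 1) *
            ∏ i ∈ Finset.Icc 1 p, (ascPochhammer K (ms i)).eval (c i))) := by
  have hmi : ∀ i ∈ Finset.Icc 1 p, ms i ≤ n := fun i hi =>
    le_trans (Finset.single_le_sum (fun _ _ => Nat.zero_le _) hi) hm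
  have hcne : ∀ i ∈ Finset.Icc 1 p, ∀ j : ℕ, j ≤ n →
      (ascPochhammer K j).eval (c i) ≠ 0 := by
    intro i hi j hj
    rw [asc_eval_prod]
    refine Finset.prod_ne_zero_iff.mpr fun t ht => ?_
    simp only [Finset.mem_range] at ht
    exact hc i (Finset.mem_Icc.mp hi).1 (Finset.mem_Icc.mp hi).2 t (by omega)
  set P : K[X] := ∏ i ∈ Finset.Icc 1 p, ∏ t ∈ Finset.range (ms i), (X + C (c i + t))
    with hPdef
  have hPm : P.Monic := monic_prod_of_monic _ _
    (fun i _ => monic_prod_of_monic _ _ (fun t _ => monic_X_add_C _))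
  have hPdeg : P.natDegree = ∑ i ∈ Finset.Icc 1 p, ms i := by
    rw [hPdef, natDegree_prod_of_monic _ _
      (fun i _ => monic_prod_of_monic _ _ (fun t _ => monic_X_add_C _))]
    refine Finset.sum_congr rfl fun i _ => ?_
    rw [natDegree_prod_of_monic _ _ (fun t _ => monic_X_add_C _)]
    simp only [natDegree_X_add_C]
    simp
  have hPeval : ∀ x : K,
      P.eval x = ∏ i ∈ Finset.Icc 1 p, (ascPochhammer K (ms i)).eval (c i + x) := by
    intro x
    rw [hPdef, eval_prod]
    refine Finset.prod_congr rfl fun i _ => ?_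
    rw [eval_prod, asc_eval_prod]
    refine Finset.prod_congr rfl fun t _ => ?_
    rw [eval_add, eval_X, eval_C]
    ring
  set D := ∏ i ∈ Finset.Icc 1 p, (ascPochhammer K (ms i)).eval (c i) with hDdef
  have hD : D ≠ 0 :=
    Finset.prod_ne_zero_iff.mpr fun i hi => hcne i hi (ms i) (hmi i hi)
  have hswap : ∀ i (j : ℕ),
      (ascPochhammer K j).eval (c i + (ms i : K)) * (ascPochhammer K (ms i)).eval (c i)
        = (ascPochhammer K (ms i)).eval (c i + (j : K)) * (ascPochhammer K j).eval (c i) := by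
    intro i j
    have h1 := asc_shift (ms i) j (c i)
    have h2 := asc_shift j (ms i) (c i)
    rw [add_comm (ms i) j] at h1
    linear_combination h1 - h2
  have hprodswap : ∀ j : ℕ,
      (∏ i ∈ Finset.Icc 1 p, (ascPochhammer K j).eval (c i + (ms i : K))) * D
        = P.eval (j : K) * ∏ i ∈ Finset.Icc 1 p, (ascPochhammer K j).eval (c i) := by
    intro j
    rw [hPeval, hDdef, ← Finset.prod_mul_distrib, ← Finset.prod_mul_distrib]
    exact Finset.prod_congr rfl fun i _ => hswap i j
  have hdenne : ∀ j : ℕ, j ≤ n →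
      ((j.factorial : K) * ∏ i ∈ Finset.Icc 1 p, (ascPochhammer K j).eval (c i)) ≠ 0 :=
    fun j hj => mul_ne_zero (Nat.cast_ne_zero.mpr j.factorial_ne_zero)
      (Finset.prod_ne_zero_iff.mpr fun i hi => hcne i hi j hj)
  have hterm1 : ∀ j ∈ Finset.range (n+1),
      ((ascPochhammer K j).eval (-(n : K)) *
          ∏ i ∈ Finset.Icc 1 p, (ascPochhammer K j).eval (c i + (ms i : K))) /
        ((j.factorial : K) * ∏ i ∈ Finset.Icc 1 p, (ascPochhammer K j).eval (c i))
      = ((-1:K)^j * (n.choose j : K) * P.eval (j : K)) / D := by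
    intro j hj
    simp only [Finset.mem_range] at hj
    rw [asc_eval_neg_nat, div_eq_div_iff (hdenne j (by omega)) hD]
    linear_combination ((-1:K)^j * (j.factorial : K) * (n.choose j : K)) * hprodswap j
  have hsum1 :
      (∑ j ∈ Finset.range (n + 1),
        ((ascPochhammer K j).eval (-(n : K)) *
            ∏ i ∈ Finset.Icc 1 p, (ascPochhammer K j).eval (c i + (ms i : K))) /
          ((j.factorial : K) * ∏ i ∈ Finset.Icc 1 p, (ascPochhammer K j).eval (c i)))
      = ((-1:K)^n * (n.factorial : K) * P.coeff n) / D := by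
    rw [Finset.sum_congr rfl hterm1, ← Finset.sum_div,
      keyP n P (by rw [hPdeg]; exact hm)]
  refine ⟨?_, ?_, ?_⟩
  · intro hlt
    rw [hsum1, coeff_eq_zero_of_natDegree_lt (by rw [hPdeg]; exact hlt)]
    simp
  · intro heq
    have : P.coeff n = 1 := by
      have := hPm.coeff_natDegree
      rwa [hPdeg, heq] at this
    rw [hsum1, this, mul_one]
  · by_cases hd0 : d = 0
    · subst hd0
      have hsum : ∑ j ∈ Finset.range (n + 1),
          ((ascPochhammer K j).eval (-(n : K)) * (ascPochhammer K j).eval (0:K) *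
              ∏ i ∈ Finset.Icc 1 p, (ascPochhammer K j).eval (c i + (ms i : K))) /
            ((j.factorial : K) * (ascPochhammer K j).eval ((0:K) + 1) *
              ∏ i ∈ Finset.Icc 1 p, (ascPochhammer K j).eval (c i)) = 1 := by
        have hz : ∀ j ∈ Finset.range (n+1), j ≠ 0 →
            ((ascPochhammer K j).eval (-(n : K)) * (ascPochhammer K j).eval (0:K) *
              ∏ i ∈ Finset.Icc 1 p, (ascPochhammer K j).eval (c i + (ms i : K))) /
            ((j.factorial : K) * (ascPochhammer K j).eval ((0:K) + 1) *
              ∏ i ∈ Finset.Icc 1 p, (ascPochhammer K j).eval (c i)) = 0 := by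
          intro j _ hjne
          rw [ascPochhammer_eval_zero, if_neg hjne]
          simp
        rw [Finset.sum_eq_single_of_mem 0 (Finset.mem_range.mpr (by omega)) hz]
        simp
      rw [hsum]
      rw [zero_add, ascPochhammer_eval_one]
      simp only [sub_zero]
      rw [eq_comm, div_eq_one_iff_eq (mul_ne_zero (Nat.cast_ne_zero.mpr n.factorial_ne_zero) hD)]
    · have hdall : ∀ q : ℕ, q ≤ n → d + (q:K) ≠ 0 := by
        intro q hq
        rcases Nat.eq_zero_or_pos q with h | h
        · subst h; simpa using hd0
        · exact hd q h hq
      have hdplus : ∀ j : ℕ, j ≤ n → (ascPochhammer K j).eval (d + 1) ≠ 0 := by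
        intro j hj
        rw [asc_eval_prod]
        refine Finset.prod_ne_zero_iff.mpr fun t ht => ?_
        simp only [Finset.mem_range] at ht
        have := hd (t+1) (by omega) (by omega)
        push_cast at this
        rw [show d + 1 + (t:K) = d + ((t:K)+1) by ring]
        exact this
      have hdiv : ∀ j : ℕ,
          (ascPochhammer K j).eval d * (d + (j:K)) = d * (ascPochhammer K j).eval (d + 1) := by
        intro j
        have h1 := asc_shift 1 j d
        have h2 := asc_shift j 1 d
        rw [ascPochhammer_one] at h1
        rw [show j + 1 = 1 + j by ring, ascPochhammer_one] at h2
        simp only [eval_X, Nat.cast_one] at h1 h2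
        linear_combination h2 - h1
      obtain ⟨Q, hQ⟩ := X_sub_C_dvd_sub_C_eval (a := -d) (p := P)
      have hQev : ∀ x : K, P.eval x = (x + d) * Q.eval x + P.eval (-d) := by
        intro x
        have := congrArg (Polynomial.eval x) hQ
        simp only [eval_sub, eval_mul, eval_X, eval_C] at this
        linear_combination this
      have hQdeg : Q.natDegree ≤ n ∧ Q.coeff n = 0 := by
        by_cases hQ0 : Q = 0
        · subst hQ0; simp
        · have hne : (X - C (-d)) ≠ (0 : K[X]) := X_sub_C_ne_zero _
          have hdeg : ((X - C (-d)) * Q).natDegree = 1 + Q.natDegree := by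
            rw [natDegree_mul hne hQ0, natDegree_X_sub_C]
          have hle : ((X - C (-d)) * Q).natDegree ≤ n := by
            rw [← hQ]
            refine le_trans (natDegree_sub_le _ _) ?_
            simp only [natDegree_C, max_le_iff]
            exact ⟨by rw [hPdeg]; exact hm, Nat.zero_le n⟩
          constructor
          · omega
          · exact coeff_eq_zero_of_natDegree_lt (by omega)
      set R : K[X] := C d * Q with hRdef
      have hRdeg : R.natDegree ≤ n := le_trans (natDegree_mul_le)
        (by simp only [natDegree_C, zero_add]; exact hQdeg.1)
      have hRcoeff : R.coeff n = 0 := by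
        rw [hRdef, coeff_C_mul, hQdeg.2, mul_zero]
      have hterm2 : ∀ j ∈ Finset.range (n+1),
          ((ascPochhammer K j).eval (-(n : K)) * (ascPochhammer K j).eval d *
              ∏ i ∈ Finset.Icc 1 p, (ascPochhammer K j).eval (c i + (ms i : K))) /
            ((j.factorial : K) * (ascPochhammer K j).eval (d + 1) *
              ∏ i ∈ Finset.Icc 1 p, (ascPochhammer K j).eval (c i))
          = ((-1:K)^j * (n.choose j : K) * R.eval (j:K)) / D
            + (d * P.eval (-d) / D) * ((-1:K)^j * (n.choose j : K) * (d + (j:K))⁻¹) := by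
        intro j hj
        simp only [Finset.mem_range] at hj
        have hjn : j ≤ n := by omega
        have hstep1 :
            ((ascPochhammer K j).eval (-(n : K)) * (ascPochhammer K j).eval d *
                ∏ i ∈ Finset.Icc 1 p, (ascPochhammer K j).eval (c i + (ms i : K))) /
              ((j.factorial : K) * (ascPochhammer K j).eval (d + 1) *
                ∏ i ∈ Finset.Icc 1 p, (ascPochhammer K j).eval (c i))
            = ((-1:K)^j * (n.choose j : K) * (d * P.eval (j:K))) / (D * (d + (j:K))) := by
          have hden1 : ((j.factorial : K) * (ascPochhammer K j).eval (d + 1) *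
              ∏ i ∈ Finset.Icc 1 p, (ascPochhammer K j).eval (c i)) ≠ 0 := by
            refine mul_ne_zero (mul_ne_zero (Nat.cast_ne_zero.mpr j.factorial_ne_zero)
              (hdplus j hjn)) (Finset.prod_ne_zero_iff.mpr fun i hi => hcne i hi j hjn)
          have hden2 : D * (d + (j:K)) ≠ 0 := mul_ne_zero hD (hdall j hjn)
          rw [asc_eval_neg_nat, div_eq_div_iff hden1 hden2]
          linear_combination
            ((-1:K)^j * (j.factorial : K) * (n.choose j : K) *
              ((ascPochhammer K j).eval d * (d + (j:K)))) * hprodswap j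
            + ((-1:K)^j * (j.factorial : K) * (n.choose j : K) *
              (P.eval (j:K) * ∏ i ∈ Finset.Icc 1 p, (ascPochhammer K j).eval (c i))) * hdiv j
        rw [hstep1]
        have hdj : d + (j:K) ≠ 0 := hdall j hjn
        rw [hRdef]
        simp only [eval_mul, eval_C]
        rw [hQev (j:K)]
        field_simp
        ring
      rw [Finset.sum_congr rfl hterm2, Finset.sum_add_distrib]
      have hfirst : (∑ j ∈ Finset.range (n+1),
          ((-1:K)^j * (n.choose j : K) * R.eval (j:K)) / D) = 0 := by
        rw [← Finset.sum_div, keyP n R hRdeg, hRcoeff]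
        simp
      have hsecond : (∑ j ∈ Finset.range (n+1),
          (d * P.eval (-d) / D) * ((-1:K)^j * (n.choose j : K) * (d + (j:K))⁻¹))
          = (d * P.eval (-d) / D) * ((n.factorial : K) / ∏ q ∈ Finset.range (n+1), (d + (q:K))) := by
        rw [← Finset.mul_sum, keyD n d hdall]
      have hprodd : ∏ q ∈ Finset.range (n+1), (d + (q:K))
          = d * (ascPochhammer K n).eval (d + 1) := by
        rw [Finset.prod_range_succ', asc_eval_prod]
        have e : ∏ q ∈ Finset.range n, (d + ((q+1:ℕ):K))
            = ∏ t ∈ Finset.range n, (d + 1 + (t:K)) := by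
          refine Finset.prod_congr rfl fun q _ => ?_
          push_cast
          ring
        rw [e]
        push_cast
        ring
      rw [hfirst, hsecond, hprodd, zero_add]
      have hPd : P.eval (-d) = ∏ i ∈ Finset.Icc 1 p, (ascPochhammer K (ms i)).eval (c i - d) := by
        rw [hPeval (-d)]
        refine Finset.prod_congr rfl fun i _ => ?_
        rw [sub_eq_add_neg]
      rw [hPd]
      have hascn : (ascPochhammer K n).eval (d + 1) ≠ 0 := hdplus n le_rfl
      field_simp
end

section
/- Let r, s ∈ ℕ with m := max(r,s) ≥ 1, indices 1 ≤ λ_1 < ⋯ < λ_s ≤ r when r ≥ s (λ_j := j when r ≤ s), K a field of characteristic zero, and a_1,…,a_r, b_1,…,b_s ∈ K with b_j + q ≠ 0 for every integer q ≥ 0 and every j. Let P_n(x) = Σ_{k=0}^{n} (−1)^k C(n,k) [ ∏_{i=1}^{r} (a_i + n − k)_k / ∏_{j=1}^{s} (b_j^{(n−1)} + n − k)_k ] x^{n−k} with b_j^{(n−1)} = b_j + ⌈(n−λ_j)/m⌉. For c ∈ K let T_c be the operator on K[x] given by T_c(q)(x) = x·q′(x) + c·q(x). Then P_n satisfies the (m+1)-order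 differential equation (T_{a_1} ∘ T_{a_2} ∘ ⋯ ∘ T_{a_r})(P_n′)(x) = (T_{b_1^{(n−1)}} ∘ ⋯ ∘ T_{b_s^{(n−1)}})( x·P_n′(x) − n·P_n(x) ) as an identity of polynomials in K[x]. -/
open Finset Polynomial

/-- The type II multiple orthogonal polynomials on the step-line:
`P_n(x) = Σ_{k=0}^{n} (−1)^k C(n,k) [∏_i (a_i+n−k)_k / ∏_j (b_j^{(n−1)}+n−k)_k] x^{n−k}`
with `b_j^{(n−1)} = b_j + ⌈(n−λ_j)/m⌉`. -/
noncomputable def polyP {K : Type*} [Field K] (r s m : ℕ) (lam : ℕ → ℕ) (a b : ℕ → K)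
    (n : ℕ) : Polynomial K :=
  ∑ k ∈ Finset.range (n + 1),
    Polynomial.C ((-1) ^ k * (n.choose k : K) *
        (∏ i ∈ Finset.Icc 1 r,
          (ascPochhammer K k).eval (a i + ((n - k : ℕ) : K))) /
        ∏ j ∈ Finset.Icc 1 s,
          (ascPochhammer K k).eval
            (b j + ((⌈(((n : ℤ) - (lam j : ℤ) : ℤ) : ℚ) / (m : ℚ)⌉ : ℤ) : K) +
              ((n - k : ℕ) : K))) *
      Polynomial.X ^ (n - k)

/-- The operator `T_c = x·(d/dx) + c` on `K[x]`. -/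
noncomputable def thetaOp {K : Type*} [Field K] (c : K) (q : Polynomial K) : Polynomial K :=
  Polynomial.X * Polynomial.derivative q + Polynomial.C c * q

section helpers
variable {K : Type*} [Field K]

lemma theta_mono (c e : K) (d : ℕ) : thetaOp c (C e * X ^ d) = C (e * ((d : K) + c)) * X ^ d := by
  rw [thetaOp, derivative_C_mul_X_pow]
  cases d with
  | zero => simp [C_mul, C_add]; ring
  | succ d =>
    simp only [C_mul, C_add, pow_succ, Nat.add_sub_cancel, Nat.cast_succ]
    ring

lemma deriv_mono (e : K) (d : ℕ) :
    derivative (C e * X ^ d) = C (e * (d : K)) * X ^ (d - 1) :=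
  derivative_C_mul_X_pow e d

lemma Xd_mono (e : K) (d : ℕ) :
    X * (C (e * ((d : ℕ) : K)) * X ^ (d - 1)) = C (e * (d : K)) * X ^ d := by
  cases d with
  | zero => simp
  | succ d => rw [Nat.succ_sub_one]; ring

lemma theta_zero (c : K) : thetaOp c 0 = 0 := by simp [thetaOp]

lemma fold_zero (g : ℕ → K) (L : List ℕ) :
    List.foldr (fun i q => thetaOp (g i) q) 0 L = 0 := by
  induction L with
  | nil => rfl
  | cons i L ih => simp [ih, theta_zero]

lemma theta_sum (c : K) (f : ℕ → Polynomial K) (t : Finset ℕ) :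
    thetaOp c (∑ k ∈ t, f k) = ∑ k ∈ t, thetaOp c (f k) := by
  simp [thetaOp, derivative_sum, Finset.mul_sum, Finset.sum_add_distrib]

lemma fold_sum (g : ℕ → K) (L : List ℕ) (f : ℕ → Polynomial K) (t : Finset ℕ) :
    List.foldr (fun i q => thetaOp (g i) q) (∑ k ∈ t, f k) L
      = ∑ k ∈ t, List.foldr (fun i q => thetaOp (g i) q) (f k) L := by
  induction L with
  | nil => rfl
  | cons i L ih => simp [ih, theta_sum]

lemma fold_mono (g : ℕ → K) (L : List ℕ) (e : K) (d : ℕ) :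
    List.foldr (fun i q => thetaOp (g i) q) (C e * X ^ d) L
      = C (e * (L.map (fun i => (d : K) + g i)).prod) * X ^ d := by
  induction L with
  | nil => simp
  | cons i L ih =>
    simp only [List.foldr_cons, ih, theta_mono, List.map_cons, List.prod_cons]
    congr 2
    ring

lemma list_prod_Icc (g : ℕ → K) : ∀ r : ℕ,
    ((List.range' 1 r).map g).prod = ∏ i ∈ Finset.Icc 1 r, g i := by
  intro r
  induction r with
  | zero => simp
  | succ r ih =>
    rw [List.range'_concat, List.map_append, List.prod_append,
      Finset.prod_Icc_succ_top (Nat.le_add_left 1 r), ih]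
    simp [Nat.add_comm]

lemma poch_succ_eval (k : ℕ) (x : K) :
    (ascPochhammer K (k + 1)).eval x = x * (ascPochhammer K k).eval (x + 1) := by
  rw [ascPochhammer_succ_left]
  simp [eval_comp]

lemma poch_eval_prod (k : ℕ) : ∀ x : K,
    (ascPochhammer K k).eval x = ∏ l ∈ Finset.range k, (x + (l : K)) := by
  induction k with
  | zero => simp
  | succ k ih =>
    intro x
    rw [poch_succ_eval, ih, Finset.prod_range_succ']
    rw [mul_comm]
    congr 1
    · exact Finset.prod_congr rfl fun l _ => by push_cast; ring
    · simp

end helpers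

section key
variable {K : Type*} [Field K] [CharZero K]

lemma key_coeff (r s n k : ℕ) (hk : k < n) (a β : ℕ → K)
    (hβ : ∀ j ∈ Finset.Icc 1 s, ∀ q : ℕ, β j + (q : K) ≠ 0) :
    ((-1) ^ k * (n.choose k : K) *
        (∏ i ∈ Finset.Icc 1 r, (ascPochhammer K k).eval (a i + ((n - k : ℕ) : K))) /
        ∏ j ∈ Finset.Icc 1 s, (ascPochhammer K k).eval (β j + ((n - k : ℕ) : K))) *
      ((n - k : ℕ) : K) * ∏ i ∈ Finset.Icc 1 r, (((n - (k + 1) : ℕ) : K) + a i)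
    = ((-1) ^ (k + 1) * (n.choose (k + 1) : K) *
        (∏ i ∈ Finset.Icc 1 r, (ascPochhammer K (k + 1)).eval (a i + ((n - (k + 1) : ℕ) : K))) /
        ∏ j ∈ Finset.Icc 1 s, (ascPochhammer K (k + 1)).eval (β j + ((n - (k + 1) : ℕ) : K))) *
      (((n - (k + 1) : ℕ) : K) - (n : K)) *
      ∏ j ∈ Finset.Icc 1 s, (((n - (k + 1) : ℕ) : K) + β j) := by
  have hk1 : k + 1 ≤ n := hk
  have hcast : ((n - k : ℕ) : K) = ((n - (k + 1) : ℕ) : K) + 1 := by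
    rw [show n - k = (n - (k + 1)) + 1 by omega]; push_cast; ring
  have hA : (∏ i ∈ Finset.Icc 1 r, (ascPochhammer K (k + 1)).eval (a i + ((n - (k + 1) : ℕ) : K)))
      = (∏ i ∈ Finset.Icc 1 r, (((n - (k + 1) : ℕ) : K) + a i)) *
        ∏ i ∈ Finset.Icc 1 r, (ascPochhammer K k).eval (a i + ((n - k : ℕ) : K)) := by
    rw [← Finset.prod_mul_distrib]
    refine Finset.prod_congr rfl fun i _ => ?_
    rw [poch_succ_eval, hcast]
    ring_nf
  have hB : (∏ j ∈ Finset.Icc 1 s, (ascPochhammer K (k + 1)).eval (β j + ((n - (k + 1) : ℕ) : K)))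
      = (∏ j ∈ Finset.Icc 1 s, (((n - (k + 1) : ℕ) : K) + β j)) *
        ∏ j ∈ Finset.Icc 1 s, (ascPochhammer K k).eval (β j + ((n - k : ℕ) : K)) := by
    rw [← Finset.prod_mul_distrib]
    refine Finset.prod_congr rfl fun j _ => ?_
    rw [poch_succ_eval, hcast]
    ring_nf
  have hBne : (∏ j ∈ Finset.Icc 1 s, (ascPochhammer K k).eval (β j + ((n - k : ℕ) : K))) ≠ 0 := by
    refine Finset.prod_ne_zero_iff.mpr fun j hj => ?_
    rw [poch_eval_prod]
    refine Finset.prod_ne_zero_iff.mpr fun l _ => ?_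
    have := hβ j hj ((n - k) + l)
    push_cast at this
    rw [add_assoc]
    exact this
  have hPbne : (∏ j ∈ Finset.Icc 1 s, (((n - (k + 1) : ℕ) : K) + β j)) ≠ 0 := by
    refine Finset.prod_ne_zero_iff.mpr fun j hj => ?_
    rw [add_comm]
    exact hβ j hj (n - (k + 1))
  have hch : ((n.choose (k + 1) : K)) * ((k : K) + 1) = (n.choose k : K) * ((n - k : ℕ) : K) := by
    exact_mod_cast Nat.choose_succ_right_eq n k
  have hNn : ((n - (k + 1) : ℕ) : K) - (n : K) = -((k : K) + 1) := by
    rw [Nat.cast_sub hk1]; push_cast; ring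
  rw [hA, hB, hNn, pow_succ]
  have hc2 : ((n - (k + 1) : ℕ) : K) = (n : K) - ((k : K) + 1) := by
    push_cast [Nat.cast_sub hk1]; ring
  rw [hc2] at hPbne ⊢
  field_simp
  linear_combination (-(∏ i ∈ Finset.Icc 1 r, ((n : K) - ((k : K) + 1) + a i)) *
    (∏ i ∈ Finset.Icc 1 r, (ascPochhammer K k).eval (a i + ((n - k : ℕ) : K)))) * hch

end key

/-- The `(m+1)`-order differential equation
`(T_{a_1}∘⋯∘T_{a_r})(P_n′) = (T_{b_1^{(n−1)}}∘⋯∘T_{b_s^{(n−1)}})(x·P_n′ − n·P_n)`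
satisfied by the hypergeometric multiple orthogonal polynomials `P_n`. -/
theorem stmt14 {K : Type*} [Field K] [CharZero K]
    (r s : ℕ) (hm : 1 ≤ max r s)
    (lam : ℕ → ℕ)
    (hcase :
      (s ≤ r ∧
        (∀ j, 1 ≤ j → j ≤ s → 1 ≤ lam j ∧ lam j ≤ r) ∧
        (∀ j j', 1 ≤ j → j < j' → j' ≤ s → lam j < lam j')) ∨
      (r ≤ s ∧ (∀ j, 1 ≤ j → j ≤ s → lam j = j)))
    (a b : ℕ → K)
    (hb : ∀ j, 1 ≤ j → j ≤ s → ∀ q : ℕ, b j + (q : K) ≠ 0)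
    (n : ℕ) :
    List.foldr (fun i q => thetaOp (a i) q)
        (Polynomial.derivative (polyP r s (max r s) lam a b n))
        (List.range' 1 r)
      = List.foldr
          (fun j q =>
            thetaOp (b j + ((⌈(((n : ℤ) - (lam j : ℤ) : ℤ) : ℚ) / (max r s : ℚ)⌉ : ℤ) : K)) q)
          (Polynomial.X * Polynomial.derivative (polyP r s (max r s) lam a b n) -
            Polynomial.C (n : K) * polyP r s (max r s) lam a b n)
          (List.range' 1 s) := by

  rcases Nat.eq_zero_or_pos n with hn0 | hn1
  · subst hn0
    have hP0 : Polynomial.derivative (polyP r s (max r s) lam a b 0) = 0 := by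
      rw [polyP]; simp
    rw [hP0, fold_zero]
    simp only [mul_zero, Nat.cast_zero, map_zero, zero_mul, zero_sub, neg_zero, sub_zero]
    rw [fold_zero]
  · -- nonvanishing of the shifted b parameters
    have hβq : ∀ j ∈ Finset.Icc 1 s, ∀ q : ℕ,
        (b j + ((⌈(((n : ℤ) - (lam j : ℤ) : ℤ) : ℚ) / (max r s : ℚ)⌉ : ℤ) : K)) + (q : K) ≠ 0 := by
      intro j hj q
      obtain ⟨hj1, hjs⟩ := Finset.mem_Icc.mp hj
      have hlam : lam j ≤ max r s := by
        rcases hcase with ⟨hsr, hbound, _⟩ | ⟨hrs, heq⟩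
        · exact le_trans (hbound j hj1 hjs).2 (le_max_left r s)
        · rw [heq j hj1 hjs]; exact le_trans hjs (le_max_right r s)
      have hmpos : (0 : ℚ) < (max r s : ℚ) := by exact_mod_cast hm
      have hceil : 0 ≤ ⌈(((n : ℤ) - (lam j : ℤ) : ℤ) : ℚ) / (max r s : ℚ)⌉ := by
        have h1 : ((-1 : ℤ) : ℚ) < (((n : ℤ) - (lam j : ℤ) : ℤ) : ℚ) / (max r s : ℚ) := by
          rw [lt_div_iff₀ hmpos]
          push_cast
          have h2 : (lam j : ℚ) ≤ (max r s : ℚ) := by exact_mod_cast hlam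
          have h3 : (1 : ℚ) ≤ (n : ℚ) := by exact_mod_cast hn1
          linarith
        have := Int.lt_ceil.mpr h1
        linarith
      obtain ⟨t, ht⟩ : ∃ t : ℕ,
          (⌈(((n : ℤ) - (lam j : ℤ) : ℤ) : ℚ) / (max r s : ℚ)⌉ : ℤ) = (t : ℤ) :=
        ⟨_, (Int.toNat_of_nonneg hceil).symm⟩
      rw [ht]
      have h4 := hb j hj1 hjs (t + q)
      push_cast at h4 ⊢
      rw [add_assoc]
      exact h4
    set c : ℕ → K := fun k => (-1) ^ k * (n.choose k : K) *
        (∏ i ∈ Finset.Icc 1 r, (ascPochhammer K k).eval (a i + ((n - k : ℕ) : K))) /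
        ∏ j ∈ Finset.Icc 1 s, (ascPochhammer K k).eval
            (b j + ((⌈(((n : ℤ) - (lam j : ℤ) : ℤ) : ℚ) / (max r s : ℚ)⌉ : ℤ) : K) +
              ((n - k : ℕ) : K)) with hcdef
    have hP : polyP r s (max r s) lam a b n
        = ∑ k ∈ Finset.range (n + 1), C (c k) * X ^ (n - k) := by
      rw [polyP]
      simp only [Nat.cast_max]
      rfl
    have hder : Polynomial.derivative (polyP r s (max r s) lam a b n)
        = ∑ k ∈ Finset.range (n + 1), C (c k * ((n - k : ℕ) : K)) * X ^ (n - k - 1) := by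
      rw [hP, derivative_sum]
      exact Finset.sum_congr rfl fun k _ => deriv_mono _ _
    have hL : List.foldr (fun i q => thetaOp (a i) q)
          (Polynomial.derivative (polyP r s (max r s) lam a b n)) (List.range' 1 r)
        = ∑ k ∈ Finset.range (n + 1),
            C (c k * ((n - k : ℕ) : K) * ∏ i ∈ Finset.Icc 1 r, (((n - k - 1 : ℕ) : K) + a i)) *
              X ^ (n - k - 1) := by
      rw [hder, fold_sum]
      refine Finset.sum_congr rfl fun k _ => ?_
      rw [fold_mono, list_prod_Icc]
    have hR0 : Polynomial.X * Polynomial.derivative (polyP r s (max r s) lam a b n) -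
          Polynomial.C (n : K) * polyP r s (max r s) lam a b n
        = ∑ k ∈ Finset.range (n + 1),
            C (c k * (((n - k : ℕ) : K) - (n : K))) * X ^ (n - k) := by
      rw [hder, hP, Finset.mul_sum, Finset.mul_sum, ← Finset.sum_sub_distrib]
      refine Finset.sum_congr rfl fun k _ => ?_
      rw [Xd_mono, ← mul_assoc, ← C_mul, ← sub_mul, ← C_sub]
      congr 2
      ring
    have hR : List.foldr
          (fun j q =>
            thetaOp (b j + ((⌈(((n : ℤ) - (lam j : ℤ) : ℤ) : ℚ) / (max r s : ℚ)⌉ : ℤ) : K)) q)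
          (Polynomial.X * Polynomial.derivative (polyP r s (max r s) lam a b n) -
            Polynomial.C (n : K) * polyP r s (max r s) lam a b n)
          (List.range' 1 s)
        = ∑ k ∈ Finset.range (n + 1),
            C (c k * (((n - k : ℕ) : K) - (n : K)) *
                ∏ j ∈ Finset.Icc 1 s,
                  (((n - k : ℕ) : K) +
                    (b j + ((⌈(((n : ℤ) - (lam j : ℤ) : ℤ) : ℚ) / (max r s : ℚ)⌉ : ℤ) : K)))) *
              X ^ (n - k) := by
      rw [hR0, fold_sum]
      refine Finset.sum_congr rfl fun k _ => ?_
      rw [fold_mono, list_prod_Icc]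
    rw [hL, hR, Finset.sum_range_succ, Finset.sum_range_succ']
    have hz1 : C (c n * ((n - n : ℕ) : K) * ∏ i ∈ Finset.Icc 1 r, (((n - n - 1 : ℕ) : K) + a i)) *
        X ^ (n - n - 1) = 0 := by
      simp [Nat.sub_self]
    have hz2 : C (c 0 * (((n - 0 : ℕ) : K) - (n : K)) *
        ∏ j ∈ Finset.Icc 1 s,
          (((n - 0 : ℕ) : K) +
            (b j + ((⌈(((n : ℤ) - (lam j : ℤ) : ℤ) : ℚ) / (max r s : ℚ)⌉ : ℤ) : K)))) *
        X ^ (n - 0) = 0 := by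
      simp
    rw [hz1, hz2, add_zero, add_zero]
    refine Finset.sum_congr rfl fun k hk => ?_
    have hkn : k < n := Finset.mem_range.mp hk
    rw [Nat.sub_sub]
    have hco : c k * ((n - k : ℕ) : K) * ∏ i ∈ Finset.Icc 1 r, (((n - (k + 1) : ℕ) : K) + a i)
        = c (k + 1) * (((n - (k + 1) : ℕ) : K) - (n : K)) *
            ∏ j ∈ Finset.Icc 1 s,
              (((n - (k + 1) : ℕ) : K) +
                (b j + ((⌈(((n : ℤ) - (lam j : ℤ) : ℤ) : ℚ) / (max r s : ℚ)⌉ : ℤ) : K))) := by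
      rw [hcdef]
      exact key_coeff r s n k hkn a
        (fun j => b j + ((⌈(((n : ℤ) - (lam j : ℤ) : ℤ) : ℚ) / (max r s : ℚ)⌉ : ℤ) : K)) hβq
    rw [hco]
end
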